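/- arXiv:2410.17668 — 12 statements merged into one kernel-verified Lean document; each statement's English description precedes it below -/
import Mathlib

section
/- Let f : 𝔽_{q^n} → 𝔽_{q^n} be a bijection with coordinate functions f_i(x) = Tr(v_i f(x)) with respect to a dual pair of ordered bases u_1,…,u_n and v_1,…,v_n of 𝔽_{q^n} over 𝔽_q, let h_1,…,h_n : 𝔽_q → 𝔽_q be maps, and let a_1,…,a_n ∈ 𝔽_{q^n}. Then the map F : 𝔽_{q^n} → 𝔽_{q^n} defined by F(x) = a_1 h_1(f_1(x)) + ⋯ + a_n h_n(f_n(x)) is a bijection of 𝔽_{q^n} if and only if (1) a_1,…,a_n form a basis of 𝔽_{q^n} over 𝔽_q and (2) each h_i is a bijection of 𝔽_q. -/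
/-- With `K = 𝔽_q`, `L = 𝔽_{q^n}`, a dual pair of ordered bases `u, v`,
a bijection `f : L → L` with coordinate functions `fᵢ(x) = Tr(vᵢ f(x))`, maps
`hᵢ : K → K` and elements `aᵢ ∈ L`, the map
`F(x) = ∑ aᵢ hᵢ(fᵢ(x))` is a bijection of `L` iff `a₁, …, aₙ` is a basis of `L`
over `K` and each `hᵢ` is a bijection of `K`. -/
theorem stmt0 {K L : Type*} [Field K] [Field L] [Algebra K L]
    [Fintype K] [Fintype L] {n : ℕ} (hn : 0 < n)
    (hdim : Module.finrank K L = n)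
    (u v : Fin n → L)
    (hbasisu : LinearIndependent K u ∧ Submodule.span K (Set.range u) = ⊤)
    (hbasisv : LinearIndependent K v ∧ Submodule.span K (Set.range v) = ⊤)
    (hdual : ∀ i j, Algebra.trace K L (u i * v j) = if i = j then 1 else 0)
    (f : L → L) (hf : Function.Bijective f)
    (h : Fin n → K → K) (a : Fin n → L) :
    Function.Bijective (fun x : L =>
        ∑ i, a i * algebraMap K L (h i (Algebra.trace K L (v i * f x)))) ↔
      (LinearIndependent K a ∧ Submodule.span K (Set.range a) = ⊤) ∧
        (∀ i, Function.Bijective (h i)) := by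
  classical
  -- basis from u
  let Bu : Module.Basis (Fin n) K L := Module.Basis.mk hbasisu.1 (by rw [hbasisu.2])
  have hBu : ∀ i, Bu i = u i := fun i => Module.Basis.mk_apply _ _ i
  -- cardinality
  have hcard : Fintype.card L = Fintype.card (Fin n → K) := by
    rw [Module.card_fintype Bu, Fintype.card_pi]
    simp [Finset.prod_const]
  -- the coordinate map c
  let c : L →ₗ[K] (Fin n → K) :=
    { toFun := fun y i => Algebra.trace K L (v i * y)
      map_add' := by intro y z; funext i; simp [mul_add]
      map_smul' := by intro s y; funext i; simp [Algebra.mul_smul_comm] }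
  -- reconstruction map
  let T : L →ₗ[K] L :=
    { toFun := fun y => ∑ i, (Algebra.trace K L (v i * y)) • u i
      map_add' := by intro y z; simp [mul_add, add_smul, Finset.sum_add_distrib]
      map_smul' := by intro s y; simp [Algebra.mul_smul_comm, smul_smul, Finset.smul_sum]
    }
  have hT : T = LinearMap.id := by
    apply Bu.ext
    intro j
    simp only [hBu, LinearMap.id_coe, id_eq, LinearMap.coe_mk, AddHom.coe_mk, T]
    have : ∀ i, Algebra.trace K L (v i * u j) = if j = i then 1 else 0 := by
      intro i; rw [mul_comm]; exact hdual j i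
    simp [this]
  have hcinj : Function.Injective c := by
    intro y z hyz
    have : T y = T z := by
      simp only [LinearMap.coe_mk, AddHom.coe_mk, T]
      refine Finset.sum_congr rfl (fun i _ => ?_)
      have h2 : Algebra.trace K L (v i * y) = Algebra.trace K L (v i * z) := congrFun hyz i
      rw [h2]
    rwa [hT] at this
  have hcbij : Function.Bijective c :=
    (Fintype.bijective_iff_injective_and_card c).2 ⟨hcinj, hcard⟩
  -- the linear combination map A
  let A : (Fin n → K) →ₗ[K] L :=
    { toFun := fun k => ∑ i, k i • a i
      map_add' := by intro y z; simp [add_smul, Finset.sum_add_distrib]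
      map_smul' := by intro s y; simp [smul_smul, Finset.smul_sum] }
  have hArange : LinearMap.range A = Submodule.span K (Set.range a) := by
    apply le_antisymm
    · rintro _ ⟨k, rfl⟩
      show ∑ i, k i • a i ∈ _
      exact Submodule.sum_mem _ fun i _ =>
        Submodule.smul_mem _ _ (Submodule.subset_span (Set.mem_range_self i))
    · rw [Submodule.span_le]
      rintro _ ⟨i, rfl⟩
      exact LinearMap.mem_range.2 ⟨Pi.single i 1, by simp [A, Pi.single_apply]⟩
  have hAinj : LinearIndependent K a ↔ Function.Injective A := by
    rw [Fintype.linearIndependent_iff, ← LinearMap.ker_eq_bot, LinearMap.ker_eq_bot']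
    constructor
    · intro hli m hm; funext i; exact hli m hm i
    · intro h2 g hg i; exact congrFun (h2 g hg) i
  have hAsurj : Submodule.span K (Set.range a) = ⊤ ↔ Function.Surjective A := by
    rw [← LinearMap.range_eq_top, hArange]
  -- H
  let H : (Fin n → K) → (Fin n → K) := fun k i => h i (k i)
  -- the map F equals A ∘ H ∘ c ∘ f
  have hFeq : (fun x : L =>
      ∑ i, a i * algebraMap K L (h i (Algebra.trace K L (v i * f x)))) =
      A ∘ H ∘ (⇑c ∘ f) := by
    funext x
    simp only [Function.comp_apply, LinearMap.coe_mk, AddHom.coe_mk, A, H, c]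
    exact Finset.sum_congr rfl fun i _ => by rw [Algebra.smul_def, mul_comm]
  have hcf : Function.Bijective (⇑c ∘ f) := hcbij.comp hf
  rw [hFeq, ← Function.comp_assoc, Function.Bijective.of_comp_iff _ hcf]
  constructor
  · intro hAH
    have hAs : Function.Surjective A := (hAH.surjective).of_comp
    have hAb : Function.Bijective A :=
      (Fintype.bijective_iff_surjective_and_card A).2 ⟨hAs, hcard.symm⟩
    have hHb : Function.Bijective H :=
      (Function.Bijective.of_comp_iff' hAb H).1 hAH
    refine ⟨⟨hAinj.2 hAb.injective, hAsurj.2 hAb.surjective⟩, ?_⟩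
    intro i
    rw [← Finite.injective_iff_bijective]
    intro s t hst
    have := hHb.injective (a₁ := Function.update (0 : Fin n → K) i s)
      (a₂ := Function.update (0 : Fin n → K) i t) ?_
    · have := congrFun this i; simpa using this
    · funext j
      simp only [H, Function.update_apply]
      by_cases hij : j = i <;> simp [hij, hst]
  · rintro ⟨⟨hli, hsp⟩, hh⟩
    have hAb : Function.Bijective A :=
      ⟨hAinj.1 hli, hAsurj.1 hsp⟩
    have hHb : Function.Bijective H := by
      rw [← Finite.injective_iff_bijective]
      intro k k' hkk
      funext i
      exact (hh i).injective (congrFun hkk i)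
    exact hAb.comp hHb
end

section
/- Let f : 𝔽_{q^n} → 𝔽_{q^n} be a bijection with coordinate functions f_i(x) = Tr(v_i f(x)) with respect to a dual pair of ordered bases u_1,…,u_n and v_1,…,v_n of 𝔽_{q^n} over 𝔽_q, let h_1,…,h_n : 𝔽_q → 𝔽_q be bijections, let a_1,…,a_n be a basis of 𝔽_{q^n} over 𝔽_q with dual basis b_1,…,b_n (i.e. Tr(a_i b_j) = 1 when i = j and 0 otherwise), and define F(x) = a_1 h_1(f_1(x)) + ⋯ + a_n h_n(f_n(x)). Then the inverse of the bijection F is given by F^{-1}(x) = f^{-1}(∑_{i=1}^n u_i h_i^{-1}(Tr(b_i x))), i.e. the map G(x) = f^{-1}(∑_{i=1}^n u_i h_i^{-1}(Tr(b_i x))) satisfies G(F(x)) = x and F(G(x)) = x for all x ∈ 𝔽_{q^n}. -/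
/-- Trace of `b j * ∑ i, a i * algebraMap c i` when `Tr (a i * b j) = δ`. -/
lemma trace_dual_sum {K L : Type*} [Field K] [Field L] [Algebra K L]
    {n : ℕ} (a b : Fin n → L)
    (hab : ∀ i j, Algebra.trace K L (a i * b j) = if i = j then 1 else 0)
    (c : Fin n → K) (j : Fin n) :
    Algebra.trace K L (b j * ∑ i, a i * algebraMap K L (c i)) = c j := by
  rw [Finset.mul_sum, map_sum]
  have : ∀ i, Algebra.trace K L (b j * (a i * algebraMap K L (c i)))
      = c i * (if i = j then 1 else 0) := by
    intro i
    have : b j * (a i * algebraMap K L (c i)) = c i • (a i * b j) := by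
      rw [Algebra.smul_def]; ring
    rw [this, map_smul, hab i j, smul_eq_mul]
  simp_rw [this, mul_ite, mul_one, mul_zero]
  simp

/-- Expansion w.r.t. a basis and a trace-dual family. -/
lemma dual_expansion {K L : Type*} [Field K] [Field L] [Algebra K L]
    {n : ℕ} (w w' : Fin n → L)
    (hli : LinearIndependent K w) (hsp : Submodule.span K (Set.range w) = ⊤)
    (hd : ∀ i j, Algebra.trace K L (w i * w' j) = if i = j then 1 else 0)
    (y : L) : ∑ i, w i * algebraMap K L (Algebra.trace K L (w' i * y)) = y := by
  let B : Module.Basis (Fin n) K L := Module.Basis.mk hli (by rw [hsp])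
  let T : L →ₗ[K] L :=
    { toFun := fun y => ∑ i, Algebra.trace K L (w' i * y) • w i
      map_add' := by intro x y; simp [mul_add, add_smul, Finset.sum_add_distrib]
      map_smul' := by
        intro c x
        simp only [mul_smul_comm, map_smul, smul_eq_mul, RingHom.id_apply,
          Finset.smul_sum, smul_smul] }
  have hT : T = LinearMap.id := by
    apply B.ext
    intro j
    simp only [T, LinearMap.coe_mk, AddHom.coe_mk, LinearMap.id_coe, id_eq,
      Module.Basis.mk_apply, B]
    have : ∀ i, Algebra.trace K L (w' i * w j) • w i
        = if j = i then w j else 0 := by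
      intro i
      rw [mul_comm, hd j i]
      split <;> simp_all
    simp_rw [this]
    simp
  have := congrFun (congrArg (fun T : L →ₗ[K] L => (T : L → L)) hT) y
  simp only [LinearMap.id_coe, id_eq] at this
  calc ∑ i, w i * algebraMap K L (Algebra.trace K L (w' i * y))
      = ∑ i, Algebra.trace K L (w' i * y) • w i := by
        simp [Algebra.smul_def, mul_comm]
    _ = y := this



/-- With the notation of Statement 0, if moreover each `hᵢ` is a bijection
with inverse `hinvᵢ`, `f` is a bijection with inverse `finv`, and `a₁,…,aₙ` is a basis
with dual basis `b₁,…,bₙ`, then the inverse of the bijection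
`F(x) = ∑ aᵢ hᵢ(Tr(vᵢ f(x)))` is `G(x) = finv (∑ uᵢ hinvᵢ(Tr(bᵢ x)))`. -/
theorem stmt1 {K L : Type*} [Field K] [Field L] [Algebra K L]
    [Fintype K] [Fintype L] {n : ℕ} (hn : 0 < n)
    (hdim : Module.finrank K L = n)
    (u v : Fin n → L)
    (hbasisu : LinearIndependent K u ∧ Submodule.span K (Set.range u) = ⊤)
    (hbasisv : LinearIndependent K v ∧ Submodule.span K (Set.range v) = ⊤)
    (hdual : ∀ i j, Algebra.trace K L (u i * v j) = if i = j then 1 else 0)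
    (f finv : L → L)
    (hf : Function.LeftInverse finv f) (hf' : Function.RightInverse finv f)
    (h hinv : Fin n → K → K)
    (hh : ∀ i, Function.LeftInverse (hinv i) (h i))
    (hh' : ∀ i, Function.RightInverse (hinv i) (h i))
    (a b : Fin n → L)
    (hbasisa : LinearIndependent K a ∧ Submodule.span K (Set.range a) = ⊤)
    (hab : ∀ i j, Algebra.trace K L (a i * b j) = if i = j then 1 else 0)
    (F G : L → L)
    (hF : ∀ x, F x = ∑ i, a i * algebraMap K L (h i (Algebra.trace K L (v i * f x))))
    (hG : ∀ x, G x = finv (∑ i, u i * algebraMap K L (hinv i (Algebra.trace K L (b i * x))))) :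
    (∀ x, G (F x) = x) ∧ (∀ x, F (G x) = x) := by
  constructor
  · intro x
    rw [hG, hF x]
    have h1 : ∀ i, Algebra.trace K L (b i *
        ∑ j, a j * algebraMap K L (h j (Algebra.trace K L (v j * f x))))
        = h i (Algebra.trace K L (v i * f x)) := fun i =>
      trace_dual_sum a b hab _ i
    simp_rw [h1]
    simp_rw [fun i => hh i (Algebra.trace K L (v i * f x))]
    rw [dual_expansion u v hbasisu.1 hbasisu.2 hdual (f x), hf x]
  · intro x
    rw [hF, hG x, hf']
    have h1 : ∀ j, Algebra.trace K L (v j *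
        ∑ i, u i * algebraMap K L (hinv i (Algebra.trace K L (b i * x))))
        = hinv j (Algebra.trace K L (b j * x)) := fun j =>
      trace_dual_sum u v hdual _ j
    simp_rw [h1]
    simp_rw [fun j => hh' j (Algebra.trace K L (b j * x))]
    exact dual_expansion a b hbasisa.1 hbasisa.2 hab x
end

section
/- Let θ_1,…,θ_n ∈ 𝔽_{q^n}, let a_1,…,a_n ∈ 𝔽_{q^n}, and let m_1,…,m_n be positive integers. Then the map F : 𝔽_{q^n} → 𝔽_{q^n} defined by F(x) = a_1 Tr(θ_1 x)^{m_1} + ⋯ + a_n Tr(θ_n x)^{m_n} is a bijection of 𝔽_{q^n} if and only if the following three conditions hold: (i) gcd(m_1 ⋯ m_n, q−1) = 1, (ii) a_1,…,a_n is a basis of 𝔽_{q^n} over 𝔽_q, and (iii) θ_1,…,θ_n is a basis of 𝔽_{q^n} over 𝔽_q. -/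
lemma pow_bij_iff {K : Type*} [Field K] [Fintype K] {m : ℕ} (hm : 0 < m) :
    Function.Bijective (fun x : K => x ^ m) ↔ Nat.gcd m (Fintype.card K - 1) = 1 := by
  classical
  have hcardu : Nat.card Kˣ = Fintype.card K - 1 := by
    rw [Nat.card_eq_fintype_card, Fintype.card_units]
  constructor
  · intro hbij
    by_contra hgcd
    set d := Nat.gcd m (Fintype.card K - 1) with hd
    have hdpos : 0 < d := Nat.gcd_pos_of_pos_left _ hm
    have hd1 : 1 < d := lt_of_le_of_ne hdpos (fun h => hgcd h.symm)
    obtain ⟨g, hg⟩ := IsCyclic.exists_generator (α := Kˣ)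
    have horder : orderOf g = Fintype.card K - 1 := by
      rw [orderOf_eq_card_of_forall_mem_zpowers hg, hcardu]
    set x : Kˣ := g ^ ((Fintype.card K - 1) / d) with hx
    have hxne : x ≠ 1 := by
      intro h
      have := orderOf_dvd_of_pow_eq_one h
      rw [horder] at this
      have hdvd : d ∣ Fintype.card K - 1 := Nat.gcd_dvd_right _ _
      have hq1pos : 0 < Fintype.card K - 1 := by
        have := Fintype.one_lt_card (α := K)
        omega
      have hlt : (Fintype.card K - 1) / d < Fintype.card K - 1 := Nat.div_lt_self hq1pos hd1
      have hpos : 0 < (Fintype.card K - 1) / d := Nat.div_pos (Nat.le_of_dvd hq1pos hdvd) hdpos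
      exact absurd (Nat.le_of_dvd hpos this) (not_le.mpr hlt)
    have hxm : x ^ m = 1 := by
      rw [hx, ← pow_mul]
      have hdvd : d ∣ Fintype.card K - 1 := Nat.gcd_dvd_right _ _
      have hdm : d ∣ m := Nat.gcd_dvd_left _ _
      obtain ⟨k, hk⟩ := hdm
      have : (Fintype.card K - 1) / d * m = (Fintype.card K - 1) * k := by
        rw [hk, ← mul_assoc, Nat.div_mul_cancel hdvd]
      rw [this, pow_mul, ← horder, pow_orderOf_eq_one, one_pow]
    have : (x : K) ^ m = (1 : K) ^ m := by
      rw [one_pow, ← Units.val_pow_eq_pow_val, hxm, Units.val_one]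
    have := hbij.injective this
    exact hxne (Units.ext this)
  · intro hgcd
    have hcop : (Nat.card Kˣ).Coprime m := by
      rw [hcardu]; exact (Nat.coprime_comm.mp hgcd)
    have hinj : Function.Injective (fun x : K => x ^ m) := by
      intro x y hxy
      simp only at hxy
      rcases eq_or_ne x 0 with rfl | hx
      · rcases eq_or_ne y 0 with rfl | hy
        · rfl
        · rw [zero_pow hm.ne'] at hxy
          exact absurd hxy.symm (pow_ne_zero _ hy)
      · rcases eq_or_ne y 0 with rfl | hy
        · rw [zero_pow hm.ne'] at hxy
          exact absurd hxy (pow_ne_zero _ hx)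
        · have : (Units.mk0 x hx) ^ m = (Units.mk0 y hy) ^ m := by
            ext; simp [hxy]
          have := (powCoprime hcop).injective this
          simpa using congrArg Units.val this
    exact Finite.injective_iff_bijective.mp hinj

lemma gcd_prod_iff {n : ℕ} (m : Fin n → ℕ) (c : ℕ) :
    Nat.gcd (∏ i, m i) c = 1 ↔ ∀ i, Nat.gcd (m i) c = 1 := by
  constructor
  · intro h i
    exact Nat.Coprime.coprime_dvd_left (Finset.dvd_prod_of_mem m (Finset.mem_univ i)) h
  · intro h
    exact Nat.Coprime.prod_left fun i _ => h i

/-- With `K = 𝔽_q`, `L = 𝔽_{q^n}`, elements `θᵢ, aᵢ ∈ L` and positive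
integers `mᵢ`, the map `F(x) = ∑ aᵢ Tr(θᵢ x)^{mᵢ}` is a bijection of `L` iff
`gcd(m₁⋯mₙ, q−1) = 1`, `a₁,…,aₙ` is a basis of `L` over `K`, and `θ₁,…,θₙ` is a basis
of `L` over `K`. -/
theorem stmt2 {K L : Type*} [Field K] [Field L] [Algebra K L]
    [Fintype K] [Fintype L] {n : ℕ} (hn : 0 < n)
    (hdim : Module.finrank K L = n)
    (θ a : Fin n → L) (m : Fin n → ℕ) (hm : ∀ i, 0 < m i) :
    Function.Bijective (fun x : L =>
        ∑ i, a i * algebraMap K L ((Algebra.trace K L (θ i * x)) ^ (m i))) ↔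
      (Nat.gcd (∏ i, m i) (Fintype.card K - 1) = 1 ∧
        (LinearIndependent K a ∧ Submodule.span K (Set.range a) = ⊤) ∧
        (LinearIndependent K θ ∧ Submodule.span K (Set.range θ) = ⊤)) := by
  classical
  have hfd : FiniteDimensional K L := Module.finite_iff_finite.mpr inferInstance
  have : Nonempty (Fin n) := ⟨⟨0, hn⟩⟩
  have hpi : Module.finrank K (Fin n → K) = n := by
    simp [Module.finrank_pi]
  have hrk : Module.finrank K L = Module.finrank K (Fin n → K) := by rw [hdim, hpi]
  set T : L →ₗ[K] (Fin n → K) :=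
    LinearMap.pi (fun i => (Algebra.trace K L) ∘ₗ (LinearMap.mulLeft K (θ i))) with hTdef
  set Sa : (Fin n → K) →ₗ[K] L := Fintype.linearCombination K a with hSadef
  set P : (Fin n → K) → (Fin n → K) := fun y i => (y i) ^ (m i) with hPdef
  have hT : ∀ (x : L) (i : Fin n), T x i = Algebra.trace K L (θ i * x) := fun x i => rfl
  have hSa : ∀ y, Sa y = ∑ i, y i • a i := fun y => rfl
  have hFeq : (fun x : L => ∑ i, a i * algebraMap K L ((Algebra.trace K L (θ i * x)) ^ m i))
      = Sa ∘ P ∘ T := by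
    funext x
    simp only [Function.comp_apply, hSa, Algebra.smul_def]
    exact Finset.sum_congr rfl fun i _ => by rw [mul_comm]; rfl
  -- T bijective iff θ is a basis
  have hTbij : Function.Bijective T ↔
      (LinearIndependent K θ ∧ Submodule.span K (Set.range θ) = ⊤) := by
    constructor
    · intro hbij
      have hind : LinearIndependent K θ := by
        rw [Fintype.linearIndependent_iff]
        intro c hc j
        obtain ⟨x, hx⟩ := hbij.surjective (Pi.single j 1)
        have h1 : Algebra.trace K L ((∑ i, c i • θ i) * x) = ∑ i, c i * (T x i) := by
          rw [Finset.sum_mul, map_sum]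
          refine Finset.sum_congr rfl fun i _ => ?_
          rw [smul_mul_assoc, map_smul, hT, smul_eq_mul]
        rw [hc, zero_mul, map_zero, hx] at h1
        have h2 : ∑ i, c i * (Pi.single j 1 : Fin n → K) i = c j := by
          rw [Fintype.sum_eq_single j fun i hij => by
            rw [Pi.single_eq_of_ne hij, mul_zero]]
          rw [Pi.single_eq_same, mul_one]
        rw [h2] at h1
        exact h1.symm
      refine ⟨hind, hind.span_eq_top_of_card_eq_finrank ?_⟩
      simp [hdim]
    · rintro ⟨hind, hspan⟩
      have hinj : Function.Injective T := by
        rw [injective_iff_map_eq_zero]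
        intro x hx
        apply (traceForm_nondegenerate K L).1 x
        intro y
        have hy : y ∈ Submodule.span K (Set.range θ) := hspan ▸ Submodule.mem_top
        induction hy using Submodule.span_induction with
        | mem z hz =>
          obtain ⟨i, rfl⟩ := hz
          have := congrFun hx i
          rw [hT] at this
          rw [Algebra.traceForm_apply, mul_comm]
          exact this
        | zero => simp
        | add u v _ _ hu hv => rw [Algebra.traceForm_apply, mul_add, map_add]; rw [Algebra.traceForm_apply] at hu hv; rw [hu, hv, add_zero]
        | smul t u _ hu => rw [Algebra.traceForm_apply, mul_smul_comm, map_smul]; rw [Algebra.traceForm_apply] at hu; rw [hu, smul_zero]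
      exact ⟨hinj, (LinearMap.injective_iff_surjective_of_finrank_eq_finrank hrk).mp hinj⟩
  -- Sa bijective iff a is a basis
  have hSbij : Function.Bijective Sa ↔
      (LinearIndependent K a ∧ Submodule.span K (Set.range a) = ⊤) := by
    constructor
    · intro hbij
      have hspan : Submodule.span K (Set.range a) = ⊤ := by
        rw [← Fintype.range_linearCombination K a, ← hSadef, LinearMap.range_eq_top]
        exact hbij.surjective
      refine ⟨linearIndependent_of_top_le_span_of_card_eq_finrank (le_of_eq hspan.symm) ?_, hspan⟩
      simp [hdim]
    · rintro ⟨hind, hspan⟩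
      have hsurj : Function.Surjective Sa := by
        rw [← LinearMap.range_eq_top, hSadef, Fintype.range_linearCombination K a]
        exact hspan
      exact ⟨(LinearMap.injective_iff_surjective_of_finrank_eq_finrank hrk.symm).mpr hsurj, hsurj⟩
  -- P bijective iff gcd conditions
  have hPbij : Function.Bijective P ↔ ∀ i, Nat.gcd (m i) (Fintype.card K - 1) = 1 := by
    constructor
    · intro hbij i
      rw [← pow_bij_iff (hm i)]
      have hinj : Function.Injective (fun x : K => x ^ m i) := by
        intro x y hxy
        simp only at hxy
        have h1 : P (Pi.single i x) = P (Pi.single i y) := by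
          funext j
          rcases eq_or_ne j i with rfl | hji
          · simp only [hPdef, Pi.single_eq_same]; exact hxy
          · simp only [hPdef, Pi.single_eq_of_ne hji]
        have := hbij.injective h1
        have := congrFun this i
        rwa [Pi.single_eq_same, Pi.single_eq_same] at this
      exact Finite.injective_iff_bijective.mp hinj
    · intro h
      have hinj : Function.Injective P := by
        intro u v huv
        funext i
        have := congrFun huv i
        exact ((pow_bij_iff (hm i)).mpr (h i)).injective this
      exact Finite.injective_iff_bijective.mp hinj
  rw [hFeq]
  constructor
  · intro hbij
    have hTinj : Function.Injective T := by
      intro x y hxy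
      apply hbij.injective
      show Sa (P (T x)) = Sa (P (T y))
      rw [hxy]
    have hTb : Function.Bijective T :=
      ⟨hTinj, (LinearMap.injective_iff_surjective_of_finrank_eq_finrank hrk).mp hTinj⟩
    have hSP : Function.Bijective (Sa ∘ P) := by
      have : (Sa ∘ P) ∘ T = Sa ∘ P ∘ T := by rw [Function.comp_assoc]
      exact (Function.Bijective.of_comp_iff (Sa ∘ P) hTb).mp (this ▸ hbij)
    have hSsurj : Function.Surjective Sa := hSP.surjective.of_comp
    have haspan : Submodule.span K (Set.range a) = ⊤ := by
      rw [← Fintype.range_linearCombination K a, ← hSadef, LinearMap.range_eq_top]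
      exact hSsurj
    have haind : LinearIndependent K a :=
      linearIndependent_of_top_le_span_of_card_eq_finrank (le_of_eq haspan.symm) (by simp [hdim])
    have hSab : Function.Bijective Sa := hSbij.mpr ⟨haind, haspan⟩
    have hPb : Function.Bijective P := (Function.Bijective.of_comp_iff' hSab P).mp hSP
    exact ⟨(gcd_prod_iff m _).mpr (hPbij.mp hPb), ⟨haind, haspan⟩, hTbij.mp hTb⟩
  · rintro ⟨hg, ha, hθ⟩
    exact (hSbij.mpr ha).comp ((hPbij.mpr ((gcd_prod_iff m _).mp hg)).comp (hTbij.mpr hθ))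
end

section
/- Let u_1,…,u_n and v_1,…,v_n be a dual pair of ordered bases of 𝔽_{q^n} over 𝔽_q and let f : 𝔽_{q^n} → 𝔽_{q^n} be a map with coordinate functions f_i(x) = Tr(v_i f(x)). Then f is a bijection of 𝔽_{q^n} if and only if there exists a multivariate polynomial F ∈ 𝔽_{q^n}[x_1, …, x_n] such that for all x ∈ 𝔽_{q^n}, F(f_1(x), …, f_n(x)) = x (where the values f_i(x) ∈ 𝔽_q are viewed as elements of 𝔽_{q^n}). -/
/-- With a dual pair of ordered bases `u, v` of `L = 𝔽_{q^n}` over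
`K = 𝔽_q`, a map `f : L → L` with coordinate functions `fᵢ(x) = Tr(vᵢ f(x))` is a
bijection of `L` iff there is a multivariate polynomial `F ∈ L[x₁,…,xₙ]` with
`F(f₁(x), …, fₙ(x)) = x` for all `x ∈ L` (the values `fᵢ(x) ∈ K` being viewed in
`L` via the algebra map). -/
theorem stmt8 {K L : Type*} [Field K] [Field L] [Algebra K L]
    [Fintype K] [Fintype L] {n : ℕ} (hn : 0 < n)
    (hdim : Module.finrank K L = n)
    (u v : Fin n → L)
    (hbasisu : LinearIndependent K u ∧ Submodule.span K (Set.range u) = ⊤)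
    (hbasisv : LinearIndependent K v ∧ Submodule.span K (Set.range v) = ⊤)
    (hdual : ∀ i j, Algebra.trace K L (u i * v j) = if i = j then 1 else 0)
    (f : L → L) :
    Function.Bijective f ↔
      ∃ F : MvPolynomial (Fin n) L,
        ∀ x : L,
          MvPolynomial.eval
            (fun i => algebraMap K L (Algebra.trace K L (v i * f x))) F = x := by
  classical
  set g : L → Fin n → L := fun x i => algebraMap K L (Algebra.trace K L (v i * f x)) with hg
  constructor
  · intro hf
    -- z = 0 whenever all trace coordinates vanish
    have hz0 : ∀ z : L, (∀ j, Algebra.trace K L (v j * z) = 0) → z = 0 := by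
      intro z hzj
      let B : Module.Basis (Fin n) K L := Module.Basis.mk hbasisu.1 (le_of_eq hbasisu.2.symm)
      have hB : ∀ i, B i = u i := fun i => Module.Basis.mk_apply _ _ i
      have hrep := B.sum_repr z
      have hc : ∀ j, B.repr z j = 0 := by
        intro j
        have h1 : Algebra.trace K L (v j * z) = B.repr z j := by
          conv_lhs => rw [← hrep]
          rw [Finset.mul_sum]
          simp only [hB, mul_smul_comm, map_sum, map_smul, smul_eq_mul]
          rw [Finset.sum_eq_single j]
          · rw [mul_comm (v j), hdual j j, if_pos rfl, mul_one]
          · intro i _ hij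
            rw [mul_comm (v j), hdual i j, if_neg hij, mul_zero]
          · intro h; exact absurd (Finset.mem_univ j) h
        rw [← h1, hzj j]
      have : z = ∑ i, B.repr z i • B i := hrep.symm
      simp [hc] at this
      exact this
    have hginj : Function.Injective g := by
      intro x y hxy
      have htr : ∀ j, Algebra.trace K L (v j * (f x - f y)) = 0 := by
        intro j
        have h := congrFun hxy j
        have h' : Algebra.trace K L (v j * f x) = Algebra.trace K L (v j * f y) :=
          (algebraMap K L).injective h
        rw [mul_sub, map_sub, h', sub_self]
      exact hf.injective (sub_eq_zero.mp (hz0 _ htr))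
    refine ⟨∑ x : L, MvPolynomial.C x * MvPolynomial.indicator (g x), ?_⟩
    intro y
    rw [map_sum]
    rw [Finset.sum_eq_single y]
    · show (MvPolynomial.eval (g y)) (MvPolynomial.C y * MvPolynomial.indicator (g y)) = y
      rw [MvPolynomial.eval_mul, MvPolynomial.eval_C,
        MvPolynomial.eval_indicator_apply_eq_one, mul_one]
    · intro x _ hxy
      have h1 : (MvPolynomial.eval fun i => (algebraMap K L) ((Algebra.trace K L) (v i * f y)))
          (MvPolynomial.C x * MvPolynomial.indicator (g x))
          = x * MvPolynomial.eval (g y) (MvPolynomial.indicator (g x)) := by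
        rw [MvPolynomial.eval_mul, MvPolynomial.eval_C]
      rw [h1, MvPolynomial.eval_indicator_apply_eq_zero (g y) (g x)
        (fun h => hxy (hginj h).symm), mul_zero]
    · intro h; exact absurd (Finset.mem_univ y) h
  · rintro ⟨F, hF⟩
    have hinj : Function.Injective f := by
      intro x y hxy
      have hx := hF x
      have hy := hF y
      rw [show (fun i => algebraMap K L (Algebra.trace K L (v i * f x)))
          = (fun i => algebraMap K L (Algebra.trace K L (v i * f y))) from by
        funext i; rw [hxy]] at hx
      rw [hx] at hy
      exact hy
    exact Finite.injective_iff_bijective.mp hinj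
end

section
/- Let t, n be positive integers with t ≤ n, and let g_1,…,g_t : 𝔽_{q^n} → 𝔽_q be maps such that the map φ_t : 𝔽_{q^n} → 𝔽_q^t, φ_t(x) = (g_1(x),…,g_t(x)), has every fiber of cardinality exactly q^{n−t}. Then for any basis u_1,…,u_n of 𝔽_{q^n} over 𝔽_q there exist maps f_{t+1},…,f_n : 𝔽_{q^n} → 𝔽_q such that the map x ↦ u_1 g_1(x) + ⋯ + u_t g_t(x) + u_{t+1} f_{t+1}(x) + ⋯ + u_n f_n(x) is a bijection of 𝔽_{q^n}. -/
/-- Let `1 ≤ t ≤ n` and `g₁,…,gₜ : L → K` be maps such that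
`x ↦ (g₁(x),…,gₜ(x))` has every fiber of cardinality exactly `q^{n−t}`. Then for any
basis `u₁,…,uₙ` of `L = 𝔽_{q^n}` over `K = 𝔽_q` there are maps
`f_{t+1},…,fₙ : L → K` (encoded as a single tuple `f : Fin n → L → K` whose first `t`
components are the `gᵢ`) making `x ↦ ∑ᵢ uᵢ fᵢ(x)` a bijection of `L`. -/
theorem stmt9 {K L : Type*} [Field K] [Field L] [Algebra K L]
    [Fintype K] [Fintype L] {n t : ℕ} (hn : 0 < n) (ht : 1 ≤ t) (ht' : t ≤ n)
    (hdim : Module.finrank K L = n)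
    (g : Fin t → L → K)
    (hfib : ∀ a : Fin t → K,
      {x : L | ∀ i, g i x = a i}.ncard = Fintype.card K ^ (n - t))
    (u : Fin n → L)
    (hbasisu : LinearIndependent K u ∧ Submodule.span K (Set.range u) = ⊤) :
    ∃ f : Fin n → L → K,
      (∀ i : Fin t, f (Fin.castLE ht' i) = g i) ∧
        Function.Bijective (fun x : L => ∑ i, u i * algebraMap K L (f i x)) := by
  classical
  set Φ : L → (Fin t → K) := fun x i => g i x with hΦ
  have hfib' : ∀ a, Nat.card {x : L | Φ x = a} = Nat.card (Fin (n - t) → K) := by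
    intro a
    have hset : {x : L | Φ x = a} = {x : L | ∀ i, g i x = a i} := by
      ext x; simp [hΦ, funext_iff]
    rw [hset, Nat.card_coe_set_eq, hfib a, Nat.card_eq_fintype_card]
    simp
  have hne : ∀ a : Fin t → K, Nonempty ({x : L | Φ x = a} ≃ (Fin (n - t) → K)) :=
    fun a => Finite.card_eq.mp (hfib' a)
  let e : ∀ a : Fin t → K, {x : L | Φ x = a} ≃ (Fin (n - t) → K) := fun a => (hne a).some
  have aux : ∀ (x : L) (b : Fin t → K) (h : Φ x = b) (j : Fin (n - t)),
      e (Φ x) ⟨x, rfl⟩ j = e b ⟨x, h⟩ j := by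
    intro x b h j; subst h; rfl
  set F : L → (Fin n → K) := fun x i =>
    if h : (i : ℕ) < t then g ⟨i, h⟩ x else e (Φ x) ⟨x, rfl⟩ ⟨(i : ℕ) - t, by omega⟩ with hF
  have hinj : Function.Injective F := by
    intro x y hxy
    have h1 : Φ x = Φ y := by
      funext i
      have h := congrFun hxy ⟨i, lt_of_lt_of_le i.2 ht'⟩
      simpa [hF, i.2, hΦ] using h
    have h2 : (⟨x, h1⟩ : {z : L | Φ z = Φ y}) = ⟨y, rfl⟩ := by
      apply (e (Φ y)).injective
      funext j
      have h := congrFun hxy ⟨t + j, by omega⟩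
      have hlt : ¬ ((t + (j : ℕ)) < t) := by omega
      simp only [hF, dif_neg hlt, Nat.add_sub_cancel_left, Fin.eta] at h
      rw [← aux x (Φ y) h1 j]
      exact h
    exact Subtype.ext_iff.mp h2
  have hbij : Function.Bijective F := by
    rw [Fintype.bijective_iff_injective_and_card]
    refine ⟨hinj, ?_⟩
    rw [Module.card_eq_pow_finrank (K := K) (V := L), hdim]
    simp
  refine ⟨fun i x => F x i, ?_, ?_⟩
  · intro i; funext x
    have hi : ((Fin.castLE ht' i : Fin n) : ℕ) < t := i.2
    simp [hF, hi]
  · have hsp : ⊤ ≤ Submodule.span K (Set.range u) := hbasisu.2.ge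
    let B : Module.Basis (Fin n) K L := Module.Basis.mk hbasisu.1 hsp
    have heq : (fun x : L => ∑ i, u i * algebraMap K L (F x i)) =
        (B.equivFun.symm ∘ F) := by
      funext x
      simp only [Function.comp_apply, Module.Basis.equivFun_symm_apply]
      refine Finset.sum_congr rfl fun i _ => ?_
      rw [Algebra.smul_def, mul_comm]
      simp [B, Module.Basis.coe_mk]
    rw [heq]
    exact B.equivFun.symm.bijective.comp hbij
end

section
/- Let t, n be positive integers with t ≤ n, let u_1,…,u_n be a basis of 𝔽_{q^n} over 𝔽_q, and let g_1,…,g_t : 𝔽_{q^n} → 𝔽_q be maps such that the map x ↦ (g_1(x),…,g_t(x)) from 𝔽_{q^n} to 𝔽_q^t has every fiber of cardinality exactly q^{n−t}. Then the number of tuples (f_{t+1},…,f_n) of maps 𝔽_{q^n} → 𝔽_q such that the map x ↦ u_1 g_1(x) + ⋯ + u_t g_t(x) + u_{t+1} f_{t+1}(x) + ⋯ + u_n f_n(x) is a bijection of 𝔽_{q^n} equals (q^{n−t}!)^{q^t}. -/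
/-- Let `1 ≤ t ≤ n`, let `u₁,…,uₙ` be a basis of `L = 𝔽_{q^n}` over
`K = 𝔽_q`, and let `g₁,…,gₜ : L → K` be such that `x ↦ (g₁(x),…,gₜ(x))` has every
fiber of cardinality exactly `q^{n−t}`. Then the number of tuples
`(f_{t+1},…,fₙ)` of maps `L → K` (encoded as tuples `f : Fin n → L → K` whose first
`t` components equal the `gᵢ`) such that `x ↦ ∑ᵢ uᵢ fᵢ(x)` is a bijection of `L`
equals `(q^{n−t}!)^{q^t}`. -/
theorem stmt10 {K L : Type*} [Field K] [Field L] [Algebra K L]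
    [Fintype K] [Fintype L] {n t : ℕ} (hn : 0 < n) (ht : 1 ≤ t) (ht' : t ≤ n)
    (hdim : Module.finrank K L = n)
    (u : Fin n → L)
    (hbasisu : LinearIndependent K u ∧ Submodule.span K (Set.range u) = ⊤)
    (g : Fin t → L → K)
    (hfib : ∀ a : Fin t → K,
      {x : L | ∀ i, g i x = a i}.ncard = Fintype.card K ^ (n - t)) :
    {f : Fin n → L → K | (∀ i : Fin t, f (Fin.castLE ht' i) = g i) ∧
        Function.Bijective
          (fun x : L => ∑ i, u i * algebraMap K L (f i x))}.ncard =
      (Nat.factorial (Fintype.card K ^ (n - t))) ^ (Fintype.card K ^ t) := by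
  classical
  let b : Module.Basis (Fin n) K L := Module.Basis.mk hbasisu.1 hbasisu.2.ge
  have hbu : ∀ i, b i = u i := fun i => Module.Basis.mk_apply _ _ i
  let idx : Fin (n - t) → Fin n := fun j => ⟨t + j.1, by have := j.isLt; omega⟩
  let e : (Fin n → K) ≃ (Fin t → K) × (Fin (n - t) → K) :=
  { toFun := fun v => (fun i => v (Fin.castLE ht' i), fun j => v (idx j))
    invFun := fun p i => if h : i.1 < t then p.1 ⟨i.1, h⟩
      else p.2 ⟨i.1 - t, by have := i.isLt; omega⟩
    left_inv := by
      intro v; funext i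
      by_cases h : i.1 < t
      · simp only [dif_pos h]
        exact congrArg v (Fin.ext rfl)
      · simp only [dif_neg h]
        refine congrArg v (Fin.ext ?_)
        have := i.isLt
        simp only [idx]
        omega
    right_inv := by
      intro p
      refine Prod.ext ?_ ?_
      · funext i
        have h : ((Fin.castLE ht' i) : Fin n).1 < t := i.isLt
        simp only [dif_pos h]
        exact congrArg p.1 (Fin.ext rfl)
      · funext j
        have h : ¬ (idx j).1 < t := by simp [idx]
        simp only [dif_neg h]
        refine congrArg p.2 (Fin.ext ?_)
        simp [idx] }
  -- bridge between sum-bijectivity and coordinate-map bijectivity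
  have hFr : ∀ f : Fin n → L → K,
      Function.Bijective (fun x : L => ∑ i, u i * algebraMap K L (f i x)) ↔
      Function.Bijective (fun x : L => (fun i => f i x : Fin n → K)) := by
    intro f
    have hfx : (fun x : L => ∑ i, u i * algebraMap K L (f i x)) =
        (b.equivFun.symm.toEquiv : (Fin n → K) ≃ L) ∘ (fun x i => f i x) := by
      funext x
      simp only [Function.comp, LinearEquiv.coe_toEquiv, Module.Basis.equivFun_symm_apply]
      refine Finset.sum_congr rfl fun i _ => ?_
      rw [hbu, Algebra.smul_def, mul_comm]
    rw [hfx]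
    exact Equiv.comp_bijective _ _
  -- fiber cardinality
  have hcard : ∀ a : Fin t → K,
      Fintype.card {x : L // ∀ i, g i x = a i} = Fintype.card (Fin (n - t) → K) := by
    intro a
    have h1 : Nat.card {x : L // ∀ i, g i x = a i} = Fintype.card K ^ (n - t) := by
      rw [← hfib a, ← Nat.card_coe_set_eq]
      rfl
    rw [← Nat.card_eq_fintype_card, h1, Fintype.card_fun, Fintype.card_fin]
  let T := {h : L → (Fin (n - t) → K) //
    Function.Bijective (fun x : L => ((fun i => g i x : Fin t → K), h x))}
  let P := ∀ a : Fin t → K, ({x : L // ∀ i, g i x = a i} ≃ (Fin (n - t) → K))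
  have hσ : ∀ (σ : P) (a a' : Fin t → K), a = a' → ∀ (x : L) (hx : ∀ i, g i x = a i)
      (hx' : ∀ i, g i x = a' i), σ a ⟨x, hx⟩ = σ a' ⟨x, hx'⟩ := by
    rintro σ a a' rfl x hx hx'; rfl
  let e1 : {f : Fin n → L → K | (∀ i : Fin t, f (Fin.castLE ht' i) = g i) ∧
        Function.Bijective
          (fun x : L => ∑ i, u i * algebraMap K L (f i x))} ≃ T :=
  { toFun := fun f => ⟨fun x j => f.1 (idx j) x, by
      have h2 := (hFr f.1).mp f.2.2
      have hcomb : (fun x : L => ((fun i => g i x : Fin t → K),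
          (fun j => f.1 (idx j) x : Fin (n - t) → K))) =
          e ∘ (fun x i => f.1 i x) := by
        funext x
        refine Prod.ext ?_ rfl
        funext i
        exact (congrFun (f.2.1 i) x).symm
      rw [hcomb]
      exact (Equiv.comp_bijective _ e).mpr h2⟩
    invFun := fun h => ⟨fun i x => if hi : i.1 < t then g ⟨i.1, hi⟩ x
        else h.1 x ⟨i.1 - t, by have := i.isLt; omega⟩, by
      constructor
      · intro i
        funext x
        have hi : ((Fin.castLE ht' i) : Fin n).1 < t := i.isLt
        simp only [dif_pos hi]
        exact congrFun (congrArg g (Fin.ext rfl)) x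
      · rw [hFr]
        have : (fun x : L => (fun i : Fin n =>
            if hi : i.1 < t then g ⟨i.1, hi⟩ x
            else h.1 x ⟨i.1 - t, by have := i.isLt; omega⟩)) =
            e.symm ∘ (fun x : L => ((fun i => g i x : Fin t → K), h.1 x)) := rfl
        rw [this]
        exact (Equiv.comp_bijective _ e.symm).mpr h.2⟩
    left_inv := by
      intro f
      apply Subtype.ext
      funext i x
      by_cases hi : i.1 < t
      · simp only [dif_pos hi]
        rw [← f.2.1 ⟨i.1, hi⟩]
        exact (congrFun (congrArg f.1 (Fin.ext rfl)) x).symm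
      · simp only [dif_neg hi]
        refine congrFun (congrArg f.1 (Fin.ext ?_)) x
        have := i.isLt
        simp only [idx]
        omega
    right_inv := by
      intro h
      apply Subtype.ext
      funext x j
      have hj : ¬ (idx j).1 < t := by simp [idx]
      simp only [dif_neg hj]
      refine congrArg (h.1 x) (Fin.ext ?_)
      simp [idx] }
  let e2 : T ≃ P :=
  { toFun := fun h a => Equiv.ofBijective (fun x => h.1 x.1)
      (by
        refine (Fintype.bijective_iff_injective_and_card _).mpr ⟨?_, hcard a⟩
        intro x y hxy
        refine Subtype.ext (h.2.1 ?_)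
        refine Prod.ext ?_ hxy
        funext i
        simp only
        rw [x.2 i, y.2 i])
    invFun := fun σ => ⟨fun x => σ (fun i => g i x) ⟨x, fun i => rfl⟩, by
      constructor
      · intro x y hxy
        have h1 : (fun i => g i x) = (fun i => g i y) := congrArg Prod.fst hxy
        have h2 := congrArg Prod.snd hxy
        simp only at h2
        have h3 : σ (fun i => g i y) ⟨y, fun i => rfl⟩ =
            σ (fun i => g i x) ⟨y, fun i => congrFun h1.symm i⟩ :=
          hσ σ _ _ h1.symm y _ _
        rw [h3] at h2
        have := (σ (fun i => g i x)).injective h2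
        exact congrArg Subtype.val this
      · rintro ⟨a, v⟩
        refine ⟨((σ a).symm v).1, ?_⟩
        have hx := ((σ a).symm v).2
        refine Prod.ext ?_ ?_
        · funext i
          exact hx i
        · simp only
          rw [hσ σ (fun i => g i ((σ a).symm v).1) a (funext hx) _ (fun i => rfl) hx]
          have h4 : (⟨((σ a).symm v).1, hx⟩ : {x : L // ∀ i, g i x = a i}) =
              (σ a).symm v := Subtype.ext rfl
          rw [h4, Equiv.apply_symm_apply]⟩
    left_inv := fun h => Subtype.ext rfl
    right_inv := by
      intro σ
      funext a
      apply Equiv.ext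
      intro y
      show σ (fun i => g i y.1) ⟨y.1, fun i => rfl⟩ = σ a y
      rw [hσ σ (fun i => g i y.1) a (funext y.2) y.1 (fun i => rfl) y.2] }
  rw [← Nat.card_coe_set_eq, Nat.card_congr (e1.trans e2),
    Nat.card_eq_fintype_card, Fintype.card_pi]
  have hfac : ∀ a : Fin t → K,
      Fintype.card ({x : L // ∀ i, g i x = a i} ≃ (Fin (n - t) → K)) =
      Nat.factorial (Fintype.card K ^ (n - t)) := by
    intro a
    rw [Fintype.card_equiv (Fintype.equivOfCardEq (hcard a)), hcard a,
      Fintype.card_fun, Fintype.card_fin]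
  rw [Finset.prod_congr rfl (fun a _ => hfac a), Finset.prod_const,
    Finset.card_univ, Fintype.card_fun, Fintype.card_fin]
end

section
/- Let f : 𝔽_{q^n} → 𝔽_{q^n} be a bijection with coordinate functions f_i(x) = Tr(v_i f(x)) with respect to a dual pair of ordered bases u_1,…,u_n and v_1,…,v_n of 𝔽_{q^n} over 𝔽_q, let m_1,…,m_n be positive integers, and let a_1,…,a_n ∈ 𝔽_{q^n}. Then the map F(x) = a_1 (f_1(x))^{m_1} + ⋯ + a_n (f_n(x))^{m_n} is a bijection of 𝔽_{q^n} if and only if (1) gcd(m_1 ⋯ m_n, q−1) = 1 and (2) a_1,…,a_n is a basis of 𝔽_{q^n} over 𝔽_q. -/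
open Finset

private lemma aux_pow_bij {K : Type*} [Field K] [Fintype K] {m : ℕ} (hm : 0 < m)
    (h : Nat.Coprime m (Fintype.card K - 1)) :
    Function.Bijective (fun x : K => x ^ m) := by
  classical
  have hc : (Nat.card Kˣ).Coprime m := by
    rw [Nat.card_units, Nat.card_eq_fintype_card]
    exact h.symm
  refine (Fintype.bijective_iff_injective_and_card _).mpr ⟨?_, rfl⟩
  intro x y hxy
  simp only at hxy
  rcases eq_or_ne x 0 with rfl | hx
  · rw [zero_pow hm.ne', eq_comm, pow_eq_zero_iff hm.ne'] at hxy
    exact hxy.symm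
  rcases eq_or_ne y 0 with rfl | hy
  · rw [zero_pow hm.ne', pow_eq_zero_iff hm.ne'] at hxy
    exact hxy
  have hu : Units.mk0 x hx = Units.mk0 y hy := by
    apply (powCoprime hc).injective
    ext
    simpa [powCoprime] using hxy
  simpa using congrArg Units.val hu

private lemma aux_zeta {K : Type*} [Field K] [Fintype K] {m : ℕ}
    (h : ¬ Nat.Coprime m (Fintype.card K - 1)) :
    ∃ ζ : K, ζ ≠ 1 ∧ ζ ^ m = 1 := by
  classical
  obtain ⟨p, hp, hpd⟩ := Nat.exists_prime_and_dvd h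
  haveI := Fact.mk hp
  have hpm : p ∣ m := hpd.trans (Nat.gcd_dvd_left _ _)
  have hpq : p ∣ Fintype.card Kˣ := by
    rw [Fintype.card_units]
    exact hpd.trans (Nat.gcd_dvd_right _ _)
  obtain ⟨x, hxord⟩ := exists_prime_orderOf_dvd_card p hpq
  refine ⟨(x : K), ?_, ?_⟩
  · intro hx1
    have : x = 1 := Units.ext (by simpa using hx1)
    rw [this, orderOf_one] at hxord
    exact hp.one_lt.ne' hxord.symm
  · have hxm : x ^ m = 1 := orderOf_dvd_iff_pow_eq_one.mp (hxord ▸ hpm)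
    have := congrArg Units.val hxm
    simpa using this

/-- With a dual pair of ordered bases `u, v` of `L = 𝔽_{q^n}` over
`K = 𝔽_q`, a bijection `f : L → L` with coordinate functions `fᵢ(x) = Tr(vᵢ f(x))`,
positive integers `mᵢ` and elements `aᵢ ∈ L`, the map
`F(x) = ∑ aᵢ (fᵢ(x))^{mᵢ}` is a bijection of `L` iff `gcd(m₁⋯mₙ, q−1) = 1` and
`a₁,…,aₙ` is a basis of `L` over `K`. -/
theorem stmt11 {K L : Type*} [Field K] [Field L] [Algebra K L]
    [Fintype K] [Fintype L] {n : ℕ} (hn : 0 < n)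
    (hdim : Module.finrank K L = n)
    (u v : Fin n → L)
    (hbasisu : LinearIndependent K u ∧ Submodule.span K (Set.range u) = ⊤)
    (hbasisv : LinearIndependent K v ∧ Submodule.span K (Set.range v) = ⊤)
    (hdual : ∀ i j, Algebra.trace K L (u i * v j) = if i = j then 1 else 0)
    (f : L → L) (hf : Function.Bijective f)
    (m : Fin n → ℕ) (hm : ∀ i, 0 < m i) (a : Fin n → L) :
    Function.Bijective (fun x : L =>
        ∑ i, a i * algebraMap K L ((Algebra.trace K L (v i * f x)) ^ (m i))) ↔
      (Nat.gcd (∏ i, m i) (Fintype.card K - 1) = 1 ∧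
        (LinearIndependent K a ∧ Submodule.span K (Set.range a) = ⊤)) := by
  classical
  obtain ⟨hu1, hu2⟩ := hbasisu
  set Bu : Module.Basis (Fin n) K L := Module.Basis.mk hu1 hu2.ge with hBu
  -- the coordinate map is the basis coordinate map
  have hT : ∀ y : L, (fun i => Algebra.trace K L (v i * y)) = Bu.equivFun y := by
    intro y
    funext i
    conv_lhs => rw [← Bu.sum_equivFun y]
    rw [Finset.mul_sum, map_sum]
    have : ∀ j, Algebra.trace K L (v i * (Bu.equivFun y j • Bu j)) =
        Bu.equivFun y j * (if j = i then 1 else 0) := by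
      intro j
      rw [mul_smul_comm, map_smul, smul_eq_mul, hBu, Module.Basis.mk_apply,
        mul_comm (v i), hdual j i]
    simp only [this]
    simp
  -- G : the map on coordinates
  set G : (Fin n → K) → L := fun c => ∑ i, a i * algebraMap K L ((c i) ^ (m i)) with hG
  have hh : Function.Bijective (fun x : L => (fun i => Algebra.trace K L (v i * f x))) := by
    have : (fun x : L => (fun i => Algebra.trace K L (v i * f x))) =
        (Bu.equivFun : L → (Fin n → K)) ∘ f := by
      funext x
      exact hT (f x)
    rw [this]
    exact Bu.equivFun.bijective.comp hf
  have hFG : (fun x : L =>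
        ∑ i, a i * algebraMap K L ((Algebra.trace K L (v i * f x)) ^ (m i))) =
      G ∘ (fun x : L => (fun i => Algebra.trace K L (v i * f x))) := rfl
  rw [hFG, Function.Bijective.of_comp_iff G hh]
  constructor
  · intro hGbij
    have hspan : Submodule.span K (Set.range a) = ⊤ := by
      rw [eq_top_iff]
      rintro y -
      obtain ⟨c, hc⟩ := hGbij.surjective y
      rw [← hc, hG]
      refine Submodule.sum_mem _ fun i _ => ?_
      rw [show a i * algebraMap K L ((c i) ^ (m i)) = ((c i) ^ (m i)) • a i by
        rw [mul_comm, ← Algebra.smul_def]]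
      exact Submodule.smul_mem _ _ (Submodule.subset_span ⟨i, rfl⟩)
    have hli : LinearIndependent K a :=
      linearIndependent_of_top_le_span_of_card_eq_finrank hspan.ge
        (by simp [hdim])
    refine ⟨?_, hli, hspan⟩
    by_contra hcop
    have : ∃ i, ¬ Nat.Coprime (m i) (Fintype.card K - 1) := by
      by_contra hall
      push_neg at hall
      exact hcop (Nat.coprime_prod_left_iff.mpr fun i _ => hall i)
    obtain ⟨i, hi⟩ := this
    obtain ⟨ζ, hζ1, hζm⟩ := aux_zeta hi
    have key : ∀ z : K, z ^ (m i) = 1 → G (fun j => if j = i then z else 0) = a i := by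
      intro z hz
      rw [hG]
      simp only
      rw [Finset.sum_eq_single i]
      · simp [hz]
      · intro j _ hj
        simp [hj, zero_pow (hm j).ne']
      · simp
    have heq : (fun j => if j = i then ζ else 0) = (fun j => if j = i then (1 : K) else 0) :=
      hGbij.injective (by rw [key ζ hζm, key 1 (one_pow _)])
    have := congrFun heq i
    simp at this
    exact hζ1 this
  · rintro ⟨hcop, hli, hsp⟩
    set Ba : Module.Basis (Fin n) K L := Module.Basis.mk hli hsp.ge with hBa
    have hcopi : ∀ i, Nat.Coprime (m i) (Fintype.card K - 1) := fun i =>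
      Nat.coprime_prod_left_iff.mp hcop i (mem_univ i)
    have hP : Function.Bijective (fun c : Fin n → K => fun i => (c i) ^ (m i)) := by
      have := (Equiv.piCongrRight (fun i : Fin n =>
        Equiv.ofBijective _ (aux_pow_bij (hm i) (hcopi i)))).bijective
      exact this
    have hGeq : G = (Ba.equivFun.symm : (Fin n → K) → L) ∘
        (fun c : Fin n → K => fun i => (c i) ^ (m i)) := by
      funext c
      rw [hG]
      simp only [Function.comp_apply, Module.Basis.equivFun_symm_apply, hBa, Module.Basis.mk_apply]
      exact Finset.sum_congr rfl fun i _ => by rw [mul_comm, ← Algebra.smul_def]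
    rw [hGeq]
    exact Ba.equivFun.symm.bijective.comp hP
end

section
/- Let q be a prime power with q ≡ 3 (mod 4) and let m be an odd positive integer. Then the map x ↦ (x + x^q)^m + (x − x^q)^m is a bijection of 𝔽_{q^2} if and only if gcd(m, q−1) = 1. -/
-- auxiliary: c^m = 1, c^(q-1) = 1, gcd = 1 ⇒ c = 1
lemma aux_key {F : Type*} [Field F] {q m : ℕ} (hgcd : Nat.gcd m (q - 1) = 1)
    (hm : 0 < m) {c : F} (h1 : c ^ m = 1) (h2 : c ^ (q - 1) = 1) : c = 1 := by
  have hc0 : c ≠ 0 := by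
    intro h; rw [h, zero_pow hm.ne'] at h1; exact one_ne_zero h1.symm
  set u : Fˣ := Units.mk0 c hc0 with hu
  have h1u : u ^ m = 1 := by ext; simpa [hu] using h1
  have h2u : u ^ (q - 1) = 1 := by ext; simpa [hu] using h2
  have : orderOf u ∣ Nat.gcd m (q - 1) :=
    Nat.dvd_gcd (orderOf_dvd_of_pow_eq_one h1u) (orderOf_dvd_of_pow_eq_one h2u)
  rw [hgcd, Nat.dvd_one, orderOf_eq_one_iff] at this
  have := congrArg Units.val this
  simpa [hu] using this

/-- Let `q` be a prime power with `q ≡ 3 (mod 4)`, `F` a finite field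
with `q²` elements, and `m` an odd positive integer. Then
`x ↦ (x + x^q)^m + (x − x^q)^m` is a bijection of `F` iff `gcd(m, q−1) = 1`. -/
theorem stmt12 {F : Type*} [Field F] [Fintype F] (q : ℕ) (hq : IsPrimePow q)
    (hF : Fintype.card F = q ^ 2) (hq3 : q % 4 = 3)
    (m : ℕ) (hm : 0 < m) (hodd : Odd m) :
    Function.Bijective (fun x : F => (x + x ^ q) ^ m + (x - x ^ q) ^ m) ↔
      Nat.gcd m (q - 1) = 1 := by
  classical
  obtain ⟨p, k, hp, hk, hpk⟩ := hq
  rw [← Nat.prime_iff] at hp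
  haveI : Fact p.Prime := ⟨hp⟩
  have hq3' : 3 ≤ q := by omega
  -- characteristic of F is p
  have hcard : Fintype.card F = p ^ (2 * k) := by
    rw [hF, ← hpk, ← pow_mul, mul_comm]
  haveI : CharP F (ringChar F) := ringChar.charP F
  obtain ⟨n, hrp, hcard'⟩ := FiniteField.card F (ringChar F)
  have hpchar : ringChar F = p := by
    have hd : ringChar F ∣ p ^ (2 * k) := by
      rw [← hcard, hcard']; exact dvd_pow_self _ (by positivity)
    exact ((Nat.prime_dvd_prime_iff_eq hrp hp).mp (hrp.dvd_of_dvd_pow hd))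
  haveI : CharP F p := hpchar ▸ ringChar.charP F
  -- p odd, 2 ≠ 0
  have hpodd : p ≠ 2 := by
    rintro rfl
    have : 2 ∣ q := by rw [← hpk]; exact dvd_pow_self _ hk.ne'
    omega
  have h2 : (2 : F) ≠ 0 := by
    intro h
    have h2p := (CharP.cast_eq_zero_iff F p 2).mp (by exact_mod_cast h)
    have := (Nat.prime_dvd_prime_iff_eq hp Nat.prime_two).mp h2p
    exact hpodd this
  -- frobenius identities
  have frob_add : ∀ x y : F, (x + y) ^ q = x ^ q + y ^ q := by
    intro x y; rw [← hpk]; exact add_pow_char_pow ..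
  have frob_sub : ∀ x y : F, (x - y) ^ q = x ^ q - y ^ q := by
    intro x y; rw [← hpk]; exact sub_pow_char_pow ..
  have frob2 : ∀ x : F, (x ^ q) ^ q = x := by
    intro x
    rw [← pow_mul, ← sq, ← hF, FiniteField.pow_card]
  -- fixed-point power: a^q = a, a ≠ 0 ⇒ a^(q-1) = 1
  have fix_pow : ∀ a : F, a ^ q = a → a ≠ 0 → a ^ (q - 1) = 1 := by
    intro a ha ha0
    have h1 : a ^ (q - 1) * a = 1 * a := by
      rw [one_mul, ← pow_succ, Nat.sub_add_cancel (by omega)]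
      exact ha
    exact mul_right_cancel₀ ha0 h1
  constructor
  · -- bijective ⇒ gcd = 1
    intro hbij
    by_contra hgcd
    have hgpos : Nat.gcd m (q - 1) ≠ 0 := by
      intro h; rw [Nat.gcd_eq_zero_iff] at h; omega
    obtain ⟨r, hr, hrd⟩ := Nat.exists_prime_and_dvd (hgcd : Nat.gcd m (q-1) ≠ 1)
    haveI : Fact r.Prime := ⟨hr⟩
    have hrm : r ∣ m := hrd.trans (Nat.gcd_dvd_left _ _)
    have hrq : r ∣ q - 1 := hrd.trans (Nat.gcd_dvd_right _ _)
    have hrcard : r ∣ Fintype.card Fˣ := by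
      rw [Fintype.card_units, hF]
      refine hrq.trans ⟨q + 1, ?_⟩
      obtain ⟨t, rfl⟩ : ∃ t, q = t + 1 := ⟨q - 1, by omega⟩
      have h1 : (t + 1) ^ 2 = t * (t + 2) + 1 := by ring
      simp only [Nat.add_sub_cancel]
      rw [h1, Nat.add_sub_cancel]
    obtain ⟨u, hu⟩ := exists_prime_orderOf_dvd_card r hrcard
    set z : F := (u : F) with hz
    have hzq1 : z ^ (q - 1) = 1 := by
      have h1 : u ^ (q - 1) = 1 := by
        rw [← orderOf_dvd_iff_pow_eq_one, hu]; exact hrq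
      rw [hz, ← Units.val_pow_eq_pow_val, h1, Units.val_one]
    have hzm : z ^ m = 1 := by
      have h1 : u ^ m = 1 := by
        rw [← orderOf_dvd_iff_pow_eq_one, hu]; exact hrm
      rw [hz, ← Units.val_pow_eq_pow_val, h1, Units.val_one]
    have hzne : z ≠ 1 := by
      intro h
      have h1 : u = 1 := Units.ext (by simpa [hz] using h)
      rw [h1, orderOf_one] at hu
      exact hr.one_lt.ne' hu.symm
    have hzq : z ^ q = z := by
      conv_lhs => rw [← Nat.sub_add_cancel (by omega : 1 ≤ q), pow_succ, hzq1, one_mul]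
    have key : (fun x : F => (x + x ^ q) ^ m + (x - x ^ q) ^ m) z
         = (fun x : F => (x + x ^ q) ^ m + (x - x ^ q) ^ m) 1 := by
      simp only [hzq, one_pow]
      rw [sub_self, zero_pow hm.ne', add_zero, sub_self, zero_pow hm.ne', add_zero]
      have hzz : z + z = 2 * z := by ring
      have h11 : (1 : F) + 1 = 2 * 1 := by ring
      rw [hzz, h11, mul_pow, mul_pow, hzm, one_pow]
    exact hzne (hbij.injective key)
  · -- gcd = 1 ⇒ bijective
    intro hgcd
    rw [← Finite.injective_iff_bijective]
    -- cancellation lemma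
    have cancel : ∀ a b : F, a ^ m = b ^ m → a ^ q * b = a * b ^ q → a = b := by
      intro a b hab hq'
      by_cases hb : b = 0
      · subst hb
        rw [zero_pow hm.ne'] at hab
        exact pow_eq_zero_iff hm.ne' |>.mp hab
      have ha : a ≠ 0 := by
        intro h; subst h
        rw [zero_pow hm.ne'] at hab
        exact hb (pow_eq_zero_iff hm.ne' |>.mp hab.symm)
      have hc : (a / b) = 1 := by
        apply aux_key hgcd hm
        · rw [div_pow, hab, div_self (pow_ne_zero _ hb)]
        · apply fix_pow _ _ (div_ne_zero ha hb)
          rw [div_pow]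
          rw [div_eq_div_iff (pow_ne_zero _ hb) hb]
          linear_combination hq'
      field_simp at hc
      exact hc
    intro x y hxy
    simp only at hxy
    set u := x + x ^ q with hud
    set u' := y + y ^ q with hu'd
    set v := x - x ^ q with hvd
    set v' := y - y ^ q with hv'd
    have huq : u ^ q = u := by rw [hud, frob_add, frob2]; ring
    have hu'q : u' ^ q = u' := by rw [hu'd, frob_add, frob2]; ring
    have hvq : v ^ q = -v := by rw [hvd, frob_sub, frob2]; ring
    have hv'q : v' ^ q = -v' := by rw [hv'd, frob_sub, frob2]; ring
    have ha : u ^ m - u' ^ m = v' ^ m - v ^ m := by linear_combination hxy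
    have haq1 : (u ^ m - u' ^ m) ^ q = u ^ m - u' ^ m := by
      rw [frob_sub, pow_right_comm, pow_right_comm u', huq, hu'q]
    have haq2 : (u ^ m - u' ^ m) ^ q = -(u ^ m - u' ^ m) := by
      rw [ha, frob_sub, pow_right_comm, pow_right_comm v, hvq, hv'q,
        hodd.neg_pow, hodd.neg_pow]
      ring
    have ha0 : u ^ m - u' ^ m = 0 := by
      have h20 : (2 : F) * (u ^ m - u' ^ m) = 0 := by linear_combination haq2 - haq1
      rcases mul_eq_zero.mp h20 with h | h
      · exact absurd h h2
      · exact h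
    have hum : u ^ m = u' ^ m := sub_eq_zero.mp ha0
    have hvm : v ^ m = v' ^ m := by
      have h1 : v' ^ m - v ^ m = 0 := (ha0.symm.trans ha).symm
      exact (sub_eq_zero.mp h1).symm
    have hu : u = u' := by
      apply cancel _ _ hum
      rw [huq, hu'q]
    have hv : v = v' := by
      apply cancel _ _ hvm
      rw [hvq, hv'q]
      ring
    have : (2 : F) * x = 2 * y := by
      have e1 : u + v = 2 * x := by rw [hud, hvd]; ring
      have e2 : u' + v' = 2 * y := by rw [hu'd, hv'd]; ring
      rw [← e1, ← e2, hu, hv]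
    exact mul_left_cancel₀ h2 this
end

section
/- Let p be an odd prime, q a power of p with q ≡ 3 (mod 4), and r a positive integer such that m = p^r + 2 < q and gcd(p^r + 2, q − 1) = 1. Then the map x ↦ x^{p^r+2} + x^{p^r+2q} + 2x^{1+(p^r+1)q} is a bijection of 𝔽_{q^2}. -/
/-- Auxiliary injectivity lemma: if `u, u'` lie in a common eigenspace of the `q`-power
map (eigenvalue `e ≠ 0`) and `gcd(m, q-1) = 1` with `m ≠ 0`, then `u^m = u'^m` implies
`u = u'`. -/
lemma stmt16_aux {F : Type*} [Field F] (q m : ℕ) (hq1 : 1 ≤ q) (hm : m ≠ 0)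
    (hgcd : Nat.gcd m (q - 1) = 1) (e : F) (he : e ≠ 0)
    (u u' : F) (hu : u ^ q = e * u) (hu' : u' ^ q = e * u')
    (h : u ^ m = u' ^ m) : u = u' := by
  rcases eq_or_ne u' 0 with rfl | h0
  · rw [zero_pow hm, pow_eq_zero_iff hm] at h
    exact h
  have hu0 : u ≠ 0 := by
    intro h'
    rw [h', zero_pow hm] at h
    exact h0 ((pow_eq_zero_iff hm).mp h.symm)
  set t := u / u' with ht
  have ht0 : t ≠ 0 := div_ne_zero hu0 h0
  have htm : t ^ m = 1 := by
    rw [ht, div_pow, h, div_self (pow_ne_zero _ h0)]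
  have htq : t ^ q = t := by
    rw [ht, div_pow, hu, hu', mul_div_mul_left _ _ he]
  have htq1 : t ^ (q - 1) = 1 := by
    have h1 : t ^ (q - 1) * t = 1 * t := by
      rw [one_mul, ← pow_succ, Nat.sub_add_cancel hq1, htq]
    exact mul_right_cancel₀ ht0 h1
  have hone : t ^ Nat.gcd m (q - 1) = 1 := pow_gcd_eq_one.mpr ⟨htm, htq1⟩
  rw [hgcd, pow_one] at hone
  exact (div_eq_one_iff_eq h0).mp hone

/-- Let `p` be an odd prime, `q` a power of `p` with `q ≡ 3 (mod 4)`,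
and `r` a positive integer with `p^r + 2 < q` and `gcd(p^r + 2, q − 1) = 1`. Then
`x ↦ x^{p^r+2} + x^{p^r+2q} + 2x^{1+(p^r+1)q}` is a bijection of the field `F` with
`q²` elements. -/
theorem stmt16 {F : Type*} [Field F] [Fintype F] (p q r : ℕ)
    (hp : p.Prime) (hpodd : Odd p) (hq : ∃ k : ℕ, 0 < k ∧ q = p ^ k)
    (hF : Fintype.card F = q ^ 2) (hq3 : q % 4 = 3) (hr : 0 < r)
    (hlt : p ^ r + 2 < q) (hgcd : Nat.gcd (p ^ r + 2) (q - 1) = 1) :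
    Function.Bijective (fun x : F =>
      x ^ (p ^ r + 2) + x ^ (p ^ r + 2 * q) + 2 * x ^ (1 + (p ^ r + 1) * q)) := by
  obtain ⟨k, hk, hqk⟩ := hq
  haveI : Fact p.Prime := ⟨hp⟩
  -- the characteristic of `F` is `p`
  have hcard0 : ((Fintype.card F : F)) = 0 := FiniteField.cast_card_eq_zero F
  have hpF : (p : F) = 0 := by
    rw [hF, hqk, ← pow_mul] at hcard0
    push_cast at hcard0
    exact (pow_eq_zero_iff (by positivity : k * 2 ≠ 0)).mp hcard0
  have hring : ringChar F = p := CharP.ringChar_of_prime_eq_zero hp hpF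
  haveI hcharP : CharP F p := hring ▸ ringChar.charP F
  haveI : ExpChar F p := ExpChar.prime hp
  have hp2 : p ≠ 2 := by
    rintro rfl
    rcases hpodd with ⟨c, hc⟩
    omega
  have h2 : (2 : F) ≠ 0 := by
    have h22 : ((2 : ℕ) : F) ≠ 0 := by
      rw [Ne, CharP.cast_eq_zero_iff F p 2]
      intro hdvd
      have := Nat.le_of_dvd (by norm_num) hdvd
      have := hp.two_le
      omega
    simpa using h22
  set s := p ^ r with hs
  set m := s + 2 with hmdef
  have hm0 : m ≠ 0 := by omega
  have hq1 : 1 ≤ q := by omega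
  have hsodd : Odd s := hpodd.pow
  have hmodd : Odd m := by
    rcases hsodd with ⟨c, hc⟩
    exact ⟨c + 1, by omega⟩
  have hqodd : Odd q := by rw [hqk]; exact hpodd.pow
  -- Frobenius-type additivity
  have hfrob : ∀ x y : F, (x + y) ^ q = x ^ q + y ^ q := by
    intro x y
    rw [hqk]
    exact add_pow_char_pow x y p k
  have hfrobs : ∀ x y : F, (x + y) ^ s = x ^ s + y ^ s := by
    intro x y
    exact add_pow_char_pow x y p r
  have hpowq : ∀ x : F, (x ^ q) ^ q = x := by
    intro x
    rw [← pow_mul, ← sq, ← hF]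
    exact FiniteField.pow_card x
  -- key identity: 2 * f x = (x + x^q)^m + (x - x^q)^m
  have key : ∀ x : F,
      2 * (x ^ (s + 2) + x ^ (s + 2 * q) + 2 * x ^ (1 + (s + 1) * q))
        = (x + x ^ q) ^ m + (x - x ^ q) ^ m := by
    intro x
    have e1 : (x + x ^ q) ^ m = (x ^ s + (x ^ q) ^ s) * (x + x ^ q) ^ 2 := by
      rw [hmdef, pow_add, hfrobs]
    have e2s : (x - x ^ q) ^ s = x ^ s - (x ^ q) ^ s := by
      rw [sub_eq_add_neg, hfrobs, hsodd.neg_pow, ← sub_eq_add_neg]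
    have e2 : (x - x ^ q) ^ m = (x ^ s - (x ^ q) ^ s) * (x - x ^ q) ^ 2 := by
      rw [hmdef, pow_add, e2s]
    have ex1 : x ^ (s + 2) = x ^ s * x ^ 2 := by rw [pow_add]
    have ex2 : x ^ (s + 2 * q) = x ^ s * (x ^ q) ^ 2 := by
      rw [pow_add, mul_comm 2 q, pow_mul]
    have ex3 : x ^ (1 + (s + 1) * q) = x * ((x ^ q) ^ s * x ^ q) := by
      rw [pow_add, pow_one, mul_comm (s + 1) q, pow_mul, pow_succ]
    rw [ex1, ex2, ex3, e1, e2]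
    ring
  -- eigenvector properties
  have hub : ∀ z : F, (z + z ^ q) ^ q = (1 : F) * (z + z ^ q) := by
    intro z
    rw [hfrob, hpowq, one_mul, add_comm]
  have hvb : ∀ z : F, (z - z ^ q) ^ q = (-1 : F) * (z - z ^ q) := by
    intro z
    rw [sub_eq_add_neg, hfrob, hqodd.neg_pow, hpowq]
    ring
  -- injectivity
  apply Finite.injective_iff_bijective.mp
  intro x y hxy
  simp only at hxy
  have h2f : (x + x ^ q) ^ m + (x - x ^ q) ^ m
      = (y + y ^ q) ^ m + (y - y ^ q) ^ m := by
    rw [← key, ← key, hxy]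
  have h2fq : (x + x ^ q) ^ m - (x - x ^ q) ^ m
      = (y + y ^ q) ^ m - (y - y ^ q) ^ m := by
    have hc := congrArg (fun z : F => z ^ q) h2f
    rw [hfrob, hfrob, ← pow_mul, ← pow_mul, ← pow_mul, ← pow_mul] at hc
    rw [mul_comm m q, pow_mul, pow_mul, pow_mul, pow_mul] at hc
    rw [hub x, hub y, hvb x, hvb y] at hc
    rw [one_mul, one_mul, neg_one_mul, neg_one_mul, hmodd.neg_pow, hmodd.neg_pow] at hc
    simpa [sub_eq_add_neg] using hc
  have hA : (x + x ^ q) ^ m = (y + y ^ q) ^ m := by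
    have h4 : 2 * (x + x ^ q) ^ m = 2 * (y + y ^ q) ^ m := by
      linear_combination h2f + h2fq
    exact mul_left_cancel₀ h2 h4
  have hB : (x - x ^ q) ^ m = (y - y ^ q) ^ m := by
    have h4 : 2 * (x - x ^ q) ^ m = 2 * (y - y ^ q) ^ m := by
      linear_combination h2f - h2fq
    exact mul_left_cancel₀ h2 h4
  have hu : x + x ^ q = y + y ^ q :=
    stmt16_aux q m hq1 hm0 hgcd 1 one_ne_zero _ _ (hub x) (hub y) hA
  have hv : x - x ^ q = y - y ^ q :=
    stmt16_aux q m hq1 hm0 hgcd (-1) (by norm_num) _ _ (hvb x) (hvb y) hB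
  have h4 : 2 * x = 2 * y := by linear_combination hu + hv
  exact mul_left_cancel₀ h2 h4
end

section
/- Let t be an odd positive integer, q = 2^t, r an odd positive integer, and let ω ∈ 𝔽_{q^2} satisfy ω^2 + ω + 1 = 0 (ω exists since x^2 + x + 1 is irreducible over 𝔽_q for t odd). Then the map x ↦ x^{2^r+1} + x^{q(2^r+1)} + ω^2 x^{2^r+q} is a bijection of 𝔽_{q^2}. -/
lemma aux17_two_pow_odd {n : ℕ} (h : Odd n) : ∃ m, 2 ^ n = 3 * m + 2 := by
  obtain ⟨k, rfl⟩ := h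
  have h4 : ∀ k : ℕ, ∃ j, 4 ^ k = 3 * j + 1 := by
    intro k
    induction k with
    | zero => exact ⟨0, rfl⟩
    | succ n ih =>
        obtain ⟨j, hj⟩ := ih
        exact ⟨4 * j + 1, by rw [pow_succ, hj]; ring⟩
  obtain ⟨j, hj⟩ := h4 k
  refine ⟨2 * j, ?_⟩
  have h1 : 2 ^ (2 * k + 1) = 4 ^ k * 2 := by
    rw [pow_succ, pow_mul]; norm_num
  rw [h1, hj]; ring

lemma aux17_coprime {r t : ℕ} (hr : 0 < r) (ht : 0 < t) (hrodd : Odd r) (htodd : Odd t) :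
    Nat.Coprime (2 ^ r + 1) (2 ^ t - 1) := by
  set g := Nat.gcd (2 ^ r + 1) (2 ^ t - 1) with hg
  have h2r : 1 ≤ 2 ^ r := Nat.one_le_two_pow
  have h2t : 2 ≤ 2 ^ t := by
    calc (2:ℕ) = 2 ^ 1 := rfl
    _ ≤ 2 ^ t := Nat.pow_le_pow_right (by norm_num) ht
  have hgodd : ¬ (2 ∣ g) := by
    intro h2g
    have h1 : (2 : ℕ) ∣ 2 ^ t - 1 := h2g.trans (Nat.gcd_dvd_right _ _)
    have he : (2:ℕ) ∣ 2 ^ t := dvd_pow_self 2 ht.ne'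
    omega
  have hd1 : g ∣ 2 ^ (2 * r) - 1 := by
    refine (Nat.gcd_dvd_left _ _).trans ⟨2 ^ r - 1, ?_⟩
    obtain ⟨c, hc⟩ := Nat.exists_eq_add_of_le h2r
    have h2 : 2 ^ (2 * r) = 2 ^ r * 2 ^ r := by rw [two_mul, pow_add]
    rw [h2, hc]
    have h3 : (1 + c) - 1 = c := by omega
    rw [h3]
    have h4 : (1 + c) * (1 + c) = (1 + c + 1) * c + 1 := by ring
    rw [h4]
    exact Nat.add_sub_cancel _ _
  have hd2 : g ∣ 2 ^ t - 1 := Nat.gcd_dvd_right _ _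
  have hgpos : 0 < g := Nat.gcd_pos_of_pos_left _ (by positivity)
  have hcop2 : Nat.Coprime 2 g := by
    rcases Nat.coprime_or_dvd_of_prime Nat.prime_two g with h | h
    · exact h
    · exact absurd h hgodd
  haveI : NeZero g := ⟨hgpos.ne'⟩
  set u : (ZMod g)ˣ := ZMod.unitOfCoprime 2 hcop2 with hu
  have hcast : ∀ n : ℕ, g ∣ 2 ^ n - 1 → (2 : ZMod g) ^ n = 1 := by
    intro n hdvd
    have h1 : ((2 ^ n - 1 : ℕ) : ZMod g) = 0 := by
      rw [ZMod.natCast_eq_zero_iff]; exact hdvd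
    have hn1 : (2:ℕ) ^ n - 1 + 1 = 2 ^ n := by
      have : 1 ≤ (2:ℕ) ^ n := Nat.one_le_two_pow
      omega
    have h2 : ((2 ^ n - 1 + 1 : ℕ) : ZMod g) = (2 : ZMod g) ^ n := by
      rw [hn1]; push_cast; ring
    rw [Nat.cast_add, h1, Nat.cast_one, zero_add] at h2
    exact h2.symm
  have huval : (u : ZMod g) = (2 : ZMod g) := by
    rw [hu, ZMod.coe_unitOfCoprime]; push_cast; ring
  have hu2r : u ^ (2 * r) = 1 := by
    apply Units.ext
    rw [Units.val_pow_eq_pow_val, huval, Units.val_one]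
    exact hcast _ hd1
  have hut : u ^ t = 1 := by
    apply Units.ext
    rw [Units.val_pow_eq_pow_val, huval, Units.val_one]
    exact hcast _ hd2
  have hcop2t : Nat.Coprime 2 t := by
    rw [Nat.prime_two.coprime_iff_not_dvd]
    rw [Nat.odd_iff] at htodd
    omega
  have hgcd : Nat.gcd (2 * r) t = Nat.gcd r t := Nat.Coprime.gcd_mul_left_cancel r hcop2t
  have hord : orderOf u ∣ Nat.gcd r t := by
    rw [← hgcd]
    exact Nat.dvd_gcd (orderOf_dvd_of_pow_eq_one hu2r) (orderOf_dvd_of_pow_eq_one hut)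
  have hud : u ^ Nat.gcd r t = 1 := orderOf_dvd_iff_pow_eq_one.mp hord
  have h2d : (2 : ZMod g) ^ Nat.gcd r t = 1 := by
    have h5 := congrArg (Units.val) hud
    rwa [Units.val_pow_eq_pow_val, huval, Units.val_one] at h5
  have hgd : g ∣ 2 ^ Nat.gcd r t - 1 := by
    rw [← ZMod.natCast_eq_zero_iff]
    have h1 : 1 ≤ (2:ℕ) ^ Nat.gcd r t := Nat.one_le_two_pow
    have h6 : ((2 ^ Nat.gcd r t - 1 : ℕ) : ZMod g) = (2 : ZMod g) ^ Nat.gcd r t - 1 := by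
      rw [Nat.cast_sub h1]; push_cast; ring
    rw [h6, h2d, sub_self]
  have hdr : (2:ℕ) ^ Nat.gcd r t - 1 ∣ 2 ^ r - 1 := by
    obtain ⟨c, hc⟩ := Nat.gcd_dvd_left r t
    have h7 := Nat.sub_dvd_pow_sub_pow (2 ^ Nat.gcd r t) 1 c
    rwa [one_pow, ← pow_mul, ← hc] at h7
  have hgr : g ∣ 2 ^ r - 1 := hgd.trans hdr
  have hgr2 : g ∣ 2 ^ r + 1 := Nat.gcd_dvd_left _ _
  have hg2 : g ∣ 2 := by
    have h8 := Nat.dvd_sub hgr2 hgr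
    have he : 2 ^ r + 1 - (2 ^ r - 1) = 2 := by omega
    rwa [he] at h8
  rcases (Nat.dvd_prime Nat.prime_two).mp hg2 with h | h
  · exact h
  · exact absurd (h ▸ dvd_refl g) hgodd

/-- Let `t` be an odd positive integer, `q = 2^t`, `r` an odd positive
integer, `F` the field with `q²` elements, and `ω ∈ F` with `ω² + ω + 1 = 0`. Then
`x ↦ x^{2^r+1} + x^{q(2^r+1)} + ω² x^{2^r+q}` is a bijection of `F`. -/
theorem stmt17 {F : Type*} [Field F] [Fintype F] (t q r : ℕ)
    (ht : 0 < t) (htodd : Odd t) (hq : q = 2 ^ t)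
    (hr : 0 < r) (hrodd : Odd r)
    (hF : Fintype.card F = q ^ 2)
    (ω : F) (hω : ω ^ 2 + ω + 1 = 0) :
    Function.Bijective (fun x : F =>
      x ^ (2 ^ r + 1) + x ^ (q * (2 ^ r + 1)) + ω ^ 2 * x ^ (2 ^ r + q)) := by
  have hq2 : 2 ≤ q := by
    rw [hq]
    calc (2:ℕ) = 2 ^ 1 := rfl
    _ ≤ 2 ^ t := Nat.pow_le_pow_right (by norm_num) ht
  -- characteristic 2
  have h2 : (2 : F) = 0 := by
    have h0 : ((Fintype.card F : ℕ) : F) = 0 := FiniteField.cast_card_eq_zero F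
    rw [hF, hq] at h0
    push_cast at h0
    have h1 : (2 : F) ^ (t * 2) = 0 := by rw [pow_mul]; exact h0
    exact pow_eq_zero_iff (by positivity) |>.mp h1
  haveI : CharP F 2 := (CharP.charP_iff_prime_eq_zero Nat.prime_two).mpr h2
  haveI : Fact (Nat.Prime 2) := ⟨Nat.prime_two⟩
  -- Frobenius facts
  have hfq : ∀ a b : F, (a + b) ^ q = a ^ q + b ^ q := by
    intro a b; rw [hq]; exact add_pow_char_pow a b 2 t
  set s := 2 ^ r with hs
  have hfs : ∀ a b : F, (a + b) ^ s = a ^ s + b ^ s := by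
    intro a b; rw [hs]; exact add_pow_char_pow a b 2 r
  have hxq2 : ∀ z : F, (z ^ q) ^ q = z := by
    intro z
    calc (z ^ q) ^ q = z ^ (q ^ 2) := by rw [← pow_mul, pow_two]
    _ = z ^ Fintype.card F := by rw [hF]
    _ = z := FiniteField.pow_card z
  -- ω facts
  have hω0 : ω ≠ 0 := by
    intro h; rw [h] at hω; simp at hω
  have hω3 : ω ^ 3 = 1 := by linear_combination (ω - 1) * hω
  have hω1 : ω ≠ 1 := by
    intro h
    rw [h] at hω
    have h1 : (1 : F) = 0 := by linear_combination hω - h2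
    exact one_ne_zero h1
  have hωq : ω ^ q = ω ^ 2 := by
    obtain ⟨m, hm⟩ : ∃ m, q = 3 * m + 2 := hq ▸ aux17_two_pow_odd htodd
    rw [hm, pow_add, pow_mul, hω3, one_pow, one_mul]
  have hωs : ω ^ s = ω ^ 2 := by
    obtain ⟨m, hm⟩ : ∃ m, s = 3 * m + 2 := hs ▸ aux17_two_pow_odd hrodd
    rw [hm, pow_add, pow_mul, hω3, one_pow, one_mul]
  have hωs1 : ω ^ (s + 1) = 1 := by
    rw [pow_succ, hωs, ← pow_succ]; exact hω3
  have hω2s1 : (ω ^ 2) ^ (s + 1) = 1 := by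
    rw [← pow_mul, mul_comm, pow_mul, hωs1, one_pow]
  have hω2q : (ω ^ 2) ^ q = ω := by
    rw [← pow_mul, mul_comm, pow_mul, hωq, ← pow_mul]
    linear_combination ω * hω3
  -- behavior of the two linear forms under Frobenius
  have hT : ∀ z : F, (z + z ^ q) ^ q = z + z ^ q := by
    intro z; rw [hfq, hxq2]; ring
  have hR : ∀ z : F, (z + ω * z ^ q) ^ q = ω ^ 2 * (z + ω * z ^ q) := by
    intro z
    rw [hfq, mul_pow, hωq, hxq2]
    linear_combination (-(z ^ q)) * hω3
  -- key identity
  have hid : ∀ z : F, z ^ (s + 1) + z ^ (q * (s + 1)) + ω ^ 2 * z ^ (s + q)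
      = ω * (z + z ^ q) ^ (s + 1) + ω ^ 2 * (z + ω * z ^ q) ^ (s + 1) := by
    intro z
    have e1 : (z + z ^ q) ^ (s + 1) = (z ^ s + (z ^ q) ^ s) * (z + z ^ q) := by
      rw [pow_succ, hfs]
    have e2 : (z + ω * z ^ q) ^ (s + 1)
        = (z ^ s + ω ^ 2 * (z ^ q) ^ s) * (z + ω * z ^ q) := by
      rw [pow_succ, hfs, mul_pow, hωs]
    have e3 : z ^ (q * (s + 1)) = (z ^ q) ^ s * z ^ q := by
      rw [← pow_mul, ← pow_add]
      ring_nf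
    have e4 : z ^ (s + 1) = z ^ s * z := pow_succ z s
    have e5 : z ^ (s + q) = z ^ s * z ^ q := pow_add z s q
    rw [e1, e2, e3, e4, e5]
    linear_combination
      (-(z ^ s * z) - ω * (z ^ s * z ^ q) - (ω ^ 2 + ω) * ((z ^ q) ^ s * z)
        - (ω ^ 3 + ω ^ 2 - 1) * ((z ^ q) ^ s * z ^ q)) * hω
      + ((z ^ s * z) + ω ^ 2 * (z ^ s * z ^ q) + (ω ^ 3 + ω ^ 2) * ((z ^ q) ^ s * z)
        + (ω ^ 4 + ω ^ 3 - ω) * ((z ^ q) ^ s * z ^ q)) * h2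
  -- the "line" injectivity lemma
  have key : ∀ z w c : F, c ≠ 0 → z ^ q = c * z → w ^ q = c * w →
      z ^ (s + 1) = w ^ (s + 1) → z = w := by
    intro z w c hc hz hw hzw
    by_cases hw0 : w = 0
    · rw [hw0] at hzw ⊢
      rw [zero_pow (Nat.succ_ne_zero s)] at hzw
      exact pow_eq_zero_iff (Nat.succ_ne_zero s) |>.mp hzw
    · have hz0 : z ≠ 0 := by
        intro h
        rw [h, zero_pow (Nat.succ_ne_zero s)] at hzw
        exact hw0 (pow_eq_zero_iff (Nat.succ_ne_zero s) |>.mp hzw.symm)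
      have hρq : (z / w) ^ q = z / w := by
        rw [div_pow, hz, hw, mul_div_mul_left _ _ hc]
      have hρs : (z / w) ^ (s + 1) = 1 := by
        rw [div_pow, hzw, div_self (pow_ne_zero _ hw0)]
      have hρ0 : z / w ≠ 0 := div_ne_zero hz0 hw0
      have hρq1 : (z / w) ^ (q - 1) = 1 := by
        have hq1 : q - 1 + 1 = q := by omega
        have h3 : (z / w) ^ (q - 1) * (z / w) = z / w := by
          rw [← pow_succ, hq1, hρq]
        have h4 : (z / w) ^ (q - 1) * (z / w) = 1 * (z / w) := by rw [h3, one_mul]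
        exact mul_right_cancel₀ hρ0 h4
      have hdvd : orderOf (z / w) ∣ 1 := by
        have hd1 : orderOf (z / w) ∣ s + 1 := orderOf_dvd_of_pow_eq_one hρs
        have hd2 : orderOf (z / w) ∣ q - 1 := orderOf_dvd_of_pow_eq_one hρq1
        have := Nat.dvd_gcd hd1 hd2
        rwa [show Nat.gcd (s + 1) (q - 1) = 1 from by
          rw [hs, hq]; exact aux17_coprime hr ht hrodd htodd] at this
      have hone : z / w = 1 := orderOf_eq_one_iff.mp (Nat.dvd_one.mp hdvd)
      field_simp at hone
      exact hone
  -- injectivity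
  rw [← Finite.injective_iff_bijective]
  intro x y hxy
  simp only at hxy
  rw [hid x, hid y] at hxy
  -- abbreviations
  have hAq : ((x + x ^ q) ^ (s + 1)) ^ q = (x + x ^ q) ^ (s + 1) := by
    rw [← pow_right_comm, hT]
  have hA'q : ((y + y ^ q) ^ (s + 1)) ^ q = (y + y ^ q) ^ (s + 1) := by
    rw [← pow_right_comm, hT]
  have hBq : ((x + ω * x ^ q) ^ (s + 1)) ^ q = (x + ω * x ^ q) ^ (s + 1) := by
    rw [← pow_right_comm, hR, mul_pow, hω2s1, one_mul]
  have hB'q : ((y + ω * y ^ q) ^ (s + 1)) ^ q = (y + ω * y ^ q) ^ (s + 1) := by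
    rw [← pow_right_comm, hR, mul_pow, hω2s1, one_mul]
  set A := (x + x ^ q) ^ (s + 1) with hA
  set A' := (y + y ^ q) ^ (s + 1) with hA'
  set B := (x + ω * x ^ q) ^ (s + 1) with hB
  set B' := (y + ω * y ^ q) ^ (s + 1) with hB'
  -- hxy : ω * A + ω^2 * B = ω * A' + ω^2 * B'
  have hxy2 : ω ^ 2 * A + ω * B = ω ^ 2 * A' + ω * B' := by
    have h := congrArg (· ^ q) hxy
    rw [hfq, hfq, mul_pow, mul_pow, mul_pow, mul_pow, hAq, hBq, hA'q, hB'q, hωq, hω2q] at h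
    exact h
  have hBB : B = B' := by
    have h7 : (ω ^ 3 - ω) * (B - B') = 0 := by linear_combination ω * hxy - hxy2
    have h8 : ω ^ 3 - ω = ω ^ 2 := by linear_combination hω3 - hω + h2
    rw [h8] at h7
    have := mul_eq_zero.mp h7
    rcases this with h | h
    · exact absurd h (pow_ne_zero 2 hω0)
    · exact sub_eq_zero.mp h
  have hAA : A = A' := by
    have h9 : ω * (A - A') = 0 := by linear_combination hxy - ω ^ 2 * hBB
    rcases mul_eq_zero.mp h9 with h | h
    · exact absurd h hω0
    · exact sub_eq_zero.mp h
  -- conclude linear forms equal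
  have hTT : x + x ^ q = y + y ^ q := by
    apply key _ _ 1 one_ne_zero _ _ hAA
    · rw [hT, one_mul]
    · rw [hT, one_mul]
  have hRR : x + ω * x ^ q = y + ω * y ^ q := by
    apply key _ _ (ω ^ 2) (pow_ne_zero 2 hω0) (hR x) (hR y) hBB
  have hxq : ω ^ 2 * x ^ q = ω ^ 2 * y ^ q := by
    linear_combination hTT + hRR + (x ^ q - y ^ q) * hω
      + (-(1 + ω) * (x ^ q - y ^ q) - x + y) * h2
  have hxqyq : x ^ q = y ^ q := mul_left_cancel₀ (pow_ne_zero 2 hω0) hxq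
  calc x = (x ^ q) ^ q := (hxq2 x).symm
  _ = (y ^ q) ^ q := by rw [hxqyq]
  _ = y := hxq2 y
end

section
/- Let n ≥ 2, let γ ∈ 𝔽_{q^n} be nonzero, let u_1,…,u_{n−1} ∈ 𝔽_{q^n} be such that u_1,…,u_{n−1}, γ is a basis of 𝔽_{q^n} over 𝔽_q, and let H : 𝔽_{q^n} → 𝔽_{q^n} be a map such that x ↦ Tr(H(x)) has every fiber of cardinality exactly q^{n−1} (i.e. Tr(H(x)) is a q^{n−1}-to-1 map). Then the number of tuples (f_1,…,f_{n−1}) of maps 𝔽_{q^n} → 𝔽_q such that the map x ↦ u_1 f_1(x) + ⋯ + u_{n−1} f_{n−1}(x) + γ Tr(H(x)) is a bijection of 𝔽_{q^n} equals (q^{n−1}!)^q. -/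
section Aux
variable {K L : Type*} [Fintype K] [Fintype L] {m : ℕ}

/-- transport lemma for dependent fiber equivs -/
private theorem transfib (T : L → K) (e : ∀ a : K, ({x : L // T x = a} ≃ (Fin m → K)))
    (a a' : K) (h : a = a') (x : L) (hx : T x = a) (hx' : T x = a') :
    e a ⟨x, hx⟩ = e a' ⟨x, hx'⟩ := by subst h; rfl

/-- The main combinatorial equivalence. -/
noncomputable def mainEquiv (T : L → K)
    (hcard : ∀ a : K, Nat.card {x : L // T x = a} = Nat.card (Fin m → K)) :
    {f : Fin m → L → K //
        Function.Bijective (fun x : L => (Fin.snoc (fun i => f i x) (T x) : Fin (m+1) → K))} ≃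
      (∀ a : K, ({x : L // T x = a} ≃ (Fin m → K))) where
  toFun := fun ⟨f, hf⟩ a =>
    Equiv.ofBijective (fun x => fun i => f i x.1) (by
      refine (Nat.bijective_iff_injective_and_card _).mpr ⟨?_, hcard a⟩
      rintro ⟨x, hx⟩ ⟨y, hy⟩ h
      refine Subtype.ext (hf.1 ?_)
      show (Fin.snoc (fun i => f i x) (T x) : Fin (m+1) → K) = Fin.snoc (fun i => f i y) (T y)
      rw [hx, hy]
      have h' : (fun i => f i x) = (fun i => f i y) := h
      exact congrArg (fun w : Fin m → K => (Fin.snoc w a : Fin (m+1) → K)) h')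
  invFun := fun e =>
    ⟨fun i x => e (T x) ⟨x, rfl⟩ i, by
      constructor
      · intro x y h
        have h2 : T x = T y := by
          have := congrFun h (Fin.last m)
          simpa using this
        have h1 : e (T x) ⟨x, rfl⟩ = e (T y) ⟨y, rfl⟩ := by
          funext i
          have := congrFun h i.castSucc
          simpa using this
        rw [transfib T e (T y) (T x) h2.symm y rfl h2.symm] at h1
        have := (e (T x)).injective h1
        exact congrArg Subtype.val this
      · intro v
        refine ⟨((e (v (Fin.last m))).symm (Fin.init v)).1, ?_⟩
        set z := (e (v (Fin.last m))).symm (Fin.init v) with hzdef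
        have hz : T z.1 = v (Fin.last m) := z.2
        show (Fin.snoc (fun i => e (T z.1) ⟨z.1, rfl⟩ i) (T z.1) : Fin (m+1) → K) = v
        have : (fun i => e (T z.1) ⟨z.1, rfl⟩ i) = Fin.init v := by
          funext i
          rw [transfib T e (T z.1) (v (Fin.last m)) hz z.1 rfl hz]
          have : e (v (Fin.last m)) ⟨z.1, hz⟩ = Fin.init v := by
            have : (⟨z.1, hz⟩ : {x : L // T x = v (Fin.last m)}) = z := rfl
            rw [this, hzdef, Equiv.apply_symm_apply]
          rw [this]
        rw [this, hz, Fin.snoc_init_self]⟩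
  left_inv := fun ⟨f, hf⟩ => rfl
  right_inv := fun e => by
    funext a
    apply Equiv.ext
    rintro ⟨x, hx⟩
    show (fun i => e (T x) ⟨x, rfl⟩ i) = e a ⟨x, hx⟩
    funext i
    rw [transfib T e (T x) a hx x rfl hx]

end Aux

/-- Write `n = m + 1` with `m ≥ 1` (so `n ≥ 2`). Let `γ ∈ L = 𝔽_{q^n}`
be nonzero, `u₁,…,u_{n−1} ∈ L` be such that `u₁,…,u_{n−1}, γ` is a basis of `L` over
`K = 𝔽_q`, and `H : L → L` be such that `x ↦ Tr(H(x))` has every fiber of cardinality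
exactly `q^{n−1}`. Then the number of tuples `(f₁,…,f_{n−1})` of maps `L → K` making
`x ↦ ∑ uᵢ fᵢ(x) + γ Tr(H(x))` a bijection of `L` equals `(q^{n−1}!)^q`. -/
theorem stmt18 {K L : Type*} [Field K] [Field L] [Algebra K L]
    [Fintype K] [Fintype L] {m : ℕ} (hm : 1 ≤ m)
    (hdim : Module.finrank K L = m + 1)
    (γ : L) (hγ : γ ≠ 0) (u : Fin m → L)
    (hbasis : LinearIndependent K (Fin.snoc u γ : Fin (m + 1) → L) ∧
      Submodule.span K (Set.range (Fin.snoc u γ : Fin (m + 1) → L)) = ⊤)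
    (H : L → L)
    (hfib : ∀ a : K,
      {x : L | Algebra.trace K L (H x) = a}.ncard = Fintype.card K ^ m) :
    {f : Fin m → L → K |
        Function.Bijective (fun x : L =>
          (∑ i, u i * algebraMap K L (f i x)) +
            γ * algebraMap K L (Algebra.trace K L (H x)))}.ncard =
      (Nat.factorial (Fintype.card K ^ m)) ^ (Fintype.card K) := by
  classical
  set T : L → K := fun x => Algebra.trace K L (H x) with hT
  let b : Module.Basis (Fin (m+1)) K L := Module.Basis.mk hbasis.1 (le_of_eq hbasis.2.symm)
  have hb : ∀ i, b i = (Fin.snoc u γ : Fin (m+1) → L) i := fun i => by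
    simp [b]
  -- rewrite the map through the basis
  have key : ∀ (f : Fin m → L → K) (x : L),
      (∑ i, u i * algebraMap K L (f i x)) + γ * algebraMap K L (T x)
        = b.equivFun.symm (Fin.snoc (fun i => f i x) (T x)) := by
    intro f x
    rw [Module.Basis.equivFun_symm_apply, Fin.sum_univ_castSucc]
    simp [hb, Algebra.smul_def, mul_comm]
  have hbij : ∀ f : Fin m → L → K,
      Function.Bijective (fun x : L =>
          (∑ i, u i * algebraMap K L (f i x)) + γ * algebraMap K L (T x))
        ↔ Function.Bijective (fun x : L =>
            (Fin.snoc (fun i => f i x) (T x) : Fin (m+1) → K)) := by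
    intro f
    have : (fun x : L => (∑ i, u i * algebraMap K L (f i x)) + γ * algebraMap K L (T x))
        = ⇑b.equivFun.symm ∘ (fun x : L => (Fin.snoc (fun i => f i x) (T x) : Fin (m+1) → K)) := by
      funext x; exact key f x
    rw [this]
    exact Function.Bijective.of_comp_iff' b.equivFun.symm.bijective _
  have hcard : ∀ a : K, Nat.card {x : L // T x = a} = Nat.card (Fin m → K) := by
    intro a
    have h1 : Nat.card {x : L // T x = a} = ({x : L | T x = a}).ncard :=
      Nat.card_coe_set_eq _
    rw [h1, hfib a, Nat.card_eq_fintype_card]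
    simp
  calc {f : Fin m → L → K |
        Function.Bijective (fun x : L =>
          (∑ i, u i * algebraMap K L (f i x)) +
            γ * algebraMap K L (Algebra.trace K L (H x)))}.ncard
      = Nat.card {f : Fin m → L → K //
          Function.Bijective (fun x : L =>
            (Fin.snoc (fun i => f i x) (T x) : Fin (m+1) → K))} := by
        rw [← Nat.card_coe_set_eq]
        exact Nat.card_congr (Equiv.subtypeEquivRight hbij)
    _ = Nat.card (∀ a : K, ({x : L // T x = a} ≃ (Fin m → K))) :=
        Nat.card_congr (mainEquiv T hcard)
    _ = ∏ a : K, Nat.card ({x : L // T x = a} ≃ (Fin m → K)) := Nat.card_pi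
    _ = ∏ _a : K, Nat.factorial (Fintype.card K ^ m) := by
        refine Finset.prod_congr rfl fun a _ => ?_
        have e0 : {x : L // T x = a} ≃ (Fin m → K) :=
          Fintype.equivOfCardEq (by
            have := hcard a
            rwa [Nat.card_eq_fintype_card, Nat.card_eq_fintype_card] at this)
        rw [Nat.card_eq_fintype_card, Fintype.card_equiv e0]
        congr 1
        have := hcard a
        rw [Nat.card_eq_fintype_card, Nat.card_eq_fintype_card] at this
        rw [this]; simp
    _ = (Nat.factorial (Fintype.card K ^ m)) ^ (Fintype.card K) := by
        simp [Finset.prod_const]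
end

section
/- Let n ≥ 2, let γ ∈ 𝔽_{q^n} be nonzero, and let H : 𝔽_{q^n} → 𝔽_{q^n} be a map such that x ↦ Tr(H(x)) is not a constant map. Then the number of bijections F : 𝔽_{q^n} → 𝔽_{q^n} such that the map G : 𝔽_{q^n} → 𝔽_{q^n} defined by G(x) = F(x) − γ Tr(H(x)) is neither a bijection of 𝔽_{q^n} nor an 𝔽_q-linear map (linearized polynomial) is at least (q^{n−1}!)^q − (q^n − q)(q^n − q^2)⋯(q^n − q^{n−1}). -/
open Function Finset

section Aux

variable {K L : Type*} [Field K] [Field L] [Algebra K L] [Fintype K] [Fintype L]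
variable [DecidableEq K] [DecidableEq L]

lemma card_fiber_congr (f : L →ₗ[K] K) (hf : Surjective f) (c c' : K) :
    Fintype.card {x : L // f x = c} = Fintype.card {x : L // f x = c'} := by
  obtain ⟨d, hd⟩ := hf (c' - c)
  apply Fintype.card_congr
  refine Equiv.subtypeEquiv (Equiv.addRight d) (fun x => ?_)
  simp only [Equiv.coe_addRight, map_add, hd]
  constructor
  · rintro rfl; ring
  · intro h; linear_combination h

lemma card_fiber (f : L →ₗ[K] K) (hf : Surjective f) (c : K) :
    Fintype.card K * Fintype.card {x : L // f x = c} = Fintype.card L := by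
  have h1 : Fintype.card L = ∑ c' : K, Fintype.card {x : L // f x = c'} :=
    (Fintype.card_congr (Equiv.sigmaFiberEquiv (f : L → K)).symm).trans Fintype.card_sigma
  rw [h1, Finset.sum_congr rfl (fun c' _ => card_fiber_congr f hf c' c), Finset.sum_const,
    Finset.card_univ, smul_eq_mul]

lemma exists_good_sigma (ψ : L →ₗ[K] K) (hψs : Surjective ψ) (t : L → K)
    (hnc : ¬ ∃ c : K, ∀ x : L, t x = c) (M : ℕ)
    (hM : ∀ c, Fintype.card {x : L // ψ x = c} = M) :
    ∃ σ : L → K, (∀ c, Fintype.card {x : L // σ x = c} = M) ∧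
      Fintype.card {x : L // σ x = t x} ≠ M ∧
      Fintype.card {x : L // σ x = t x} ≠ Fintype.card L := by
  obtain ⟨x0, hx0⟩ := hψs 0
  have hM1 : 1 ≤ M := by
    rw [← hM 0]
    exact Fintype.card_pos_iff.mpr ⟨⟨x0, hx0⟩⟩
  have hq2 : 2 ≤ Fintype.card K := Fintype.one_lt_card
  have hqM : Fintype.card K * M = Fintype.card L := by
    rw [← hM 0]; exact card_fiber ψ hψs 0
  have hML : M < Fintype.card L := by nlinarith
  -- if all x agree then t is balanced
  have hfull : ∀ σ : L → K, (∀ c, Fintype.card {x : L // σ x = c} = M) →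
      Fintype.card {x : L // σ x = t x} = Fintype.card L →
      (∀ c, Fintype.card {x : L // t x = c} = M) := by
    intro σ hb h c
    have hall : ∀ x, σ x = t x := by
      by_contra hco
      push_neg at hco
      obtain ⟨x, hx⟩ := hco
      exact absurd h (Fintype.card_subtype_lt (x := x) hx).ne
    rw [← hb c]
    exact Fintype.card_congr (Equiv.subtypeEquivRight (fun x => by rw [hall x]))
  by_cases hbt : ∀ c, Fintype.card {x : L // t x = c} = M
  · -- t balanced : take σ = t + 1
    refine ⟨fun x => t x + 1, fun c => ?_, ?_, ?_⟩
    · rw [Fintype.card_congr (Equiv.subtypeEquivRight (fun x : L =>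
        (eq_sub_iff_add_eq (a := t x) (b := c) (c := 1)).symm))]
      exact hbt (c - 1)
    · have h0 : Fintype.card {x : L // t x + 1 = t x} = 0 := by
        rw [Fintype.card_eq_zero_iff]
        exact ⟨fun ⟨x, hx⟩ => by simp at hx⟩
      rw [h0]; omega
    · have h0 : Fintype.card {x : L // t x + 1 = t x} = 0 := by
        rw [Fintype.card_eq_zero_iff]
        exact ⟨fun ⟨x, hx⟩ => by simp at hx⟩
      rw [h0]
      have := Fintype.card_pos (α := L)
      omega
  · by_cases hA : Fintype.card {x : L // ψ x = t x} = M
    · -- swap construction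
      have hex : ∃ p r : L, ψ p ≠ t p ∧ ψ r ≠ t r ∧ ψ r = t p := by
        by_contra h
        push_neg at h
        -- agree/disagree sets
        have hAgr : (Finset.univ.filter (fun x : L => ψ x = t x)).card = M := by
          rw [← Fintype.card_subtype]; exact hA
        have hDne : ∃ d : L, ψ d ≠ t d := by
          by_contra hco
          push_neg at hco
          have : Fintype.card {x : L // ψ x = t x} = Fintype.card L :=
            Fintype.card_congr (Equiv.subtypeUnivEquiv hco)
          omega
        obtain ⟨d, hd⟩ := hDne
        -- fibers of values of t on disagree set are inside the agree set
        have key : ∀ p : L, ψ p ≠ t p →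
            (Finset.univ.filter (fun x : L => ψ x = t p)) ⊆
              (Finset.univ.filter (fun x : L => ψ x = t x)) := by
          intro p hp r hr
          simp only [Finset.mem_filter, Finset.mem_univ, true_and] at hr ⊢
          by_contra hr'
          exact h p r hp hr' hr
        have keyeq : ∀ p : L, ψ p ≠ t p →
            (Finset.univ.filter (fun x : L => ψ x = t p)) =
              (Finset.univ.filter (fun x : L => ψ x = t x)) := by
          intro p hp
          refine Finset.eq_of_subset_of_card_le (key p hp) ?_
          rw [hAgr, ← Fintype.card_subtype, hM (t p)]
        -- derive t constant = t d
        apply hnc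
        refine ⟨t d, fun x => ?_⟩
        by_cases hx : ψ x = t x
        · -- x in agree set = fiber of t d
          have : x ∈ Finset.univ.filter (fun y : L => ψ y = t d) := by
            rw [keyeq d hd]
            simp only [Finset.mem_filter, Finset.mem_univ, true_and]
            exact hx
          simp only [Finset.mem_filter, Finset.mem_univ, true_and] at this
          rw [← hx, this]
        · -- fiber of t x equals fiber of t d; both nonempty
          have h1 := keyeq x hx
          have h2 := keyeq d hd
          have hne : (Finset.univ.filter (fun y : L => ψ y = t x)).Nonempty := by
            rw [← Finset.card_pos, ← Fintype.card_subtype, hM (t x)]; omega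
          obtain ⟨y, hy⟩ := hne
          have hy' : y ∈ Finset.univ.filter (fun z : L => ψ z = t d) := by
            rw [h2, ← h1]; exact hy
          simp only [Finset.mem_filter, Finset.mem_univ, true_and] at hy hy'
          rw [← hy, hy']
      obtain ⟨p, r, hp, hr, hpr⟩ := hex
      refine ⟨fun x => ψ (Equiv.swap p r x), fun c => ?_, ?_, ?_⟩
      · show Fintype.card {x : L // ψ (Equiv.swap p r x) = c} = M
        exact (Fintype.card_congr ((Equiv.swap p r).subtypeEquiv
          (p := fun x => ψ (Equiv.swap p r x) = c) (q := fun x => ψ x = c)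
          (fun a => Iff.rfl))).trans (hM c)
      · show Fintype.card {x : L // ψ (Equiv.swap p r x) = t x} ≠ M
        have hsub : insert p (Finset.univ.filter (fun x : L => ψ x = t x)) ⊆
            Finset.univ.filter (fun x : L => ψ (Equiv.swap p r x) = t x) := by
          intro x hx
          simp only [Finset.mem_insert, Finset.mem_filter, Finset.mem_univ, true_and] at hx ⊢
          rcases hx with rfl | hx
          · rw [Equiv.swap_apply_left]; exact hpr
          · have hxp : x ≠ p := fun h => hp (h ▸ hx)
            have hxr : x ≠ r := fun h => hr (h ▸ hx)
            rw [Equiv.swap_apply_of_ne_of_ne hxp hxr]; exact hx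
        have hpn : p ∉ Finset.univ.filter (fun x : L => ψ x = t x) := by
          simp only [Finset.mem_filter, Finset.mem_univ, true_and]
          exact hp
        have hcard : M + 1 ≤
            (Finset.univ.filter (fun x : L => ψ (Equiv.swap p r x) = t x)).card := by
          calc M + 1 = (insert p (Finset.univ.filter (fun x : L => ψ x = t x))).card := by
                rw [Finset.card_insert_of_notMem hpn, ← Fintype.card_subtype, hA]
            _ ≤ _ := Finset.card_le_card hsub
        rw [Fintype.card_subtype]
        omega
      · show Fintype.card {x : L // ψ (Equiv.swap p r x) = t x} ≠ Fintype.card L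
        intro hfl
        have := hfull (fun x => ψ (Equiv.swap p r x)) (fun c => by
          show Fintype.card {x : L // ψ (Equiv.swap p r x) = c} = M
          exact (Fintype.card_congr ((Equiv.swap p r).subtypeEquiv
            (p := fun x => ψ (Equiv.swap p r x) = c) (q := fun x => ψ x = c)
            (fun a => Iff.rfl))).trans (hM c)) hfl
        exact hbt this
    · -- ψ itself works
      refine ⟨fun x => ψ x, hM, hA, fun h => hbt (hfull (fun x => ψ x) hM h)⟩

end Aux

/-- Let `n ≥ 2`, `L = 𝔽_{q^n}` over `K = 𝔽_q`, `γ ∈ L` nonzero, and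
`H : L → L` with `x ↦ Tr(H(x))` not constant. Then the number of bijections
`F : L → L` such that `G(x) = F(x) − γ Tr(H(x))` is neither a bijection of `L` nor
an `K`-linear map is at least `(q^{n−1}!)^q − (q^n − q)(q^n − q²)⋯(q^n − q^{n−1})`. -/
theorem stmt19 {K L : Type*} [Field K] [Field L] [Algebra K L]
    [Fintype K] [Fintype L] {n : ℕ} (hn : 2 ≤ n)
    (hdim : Module.finrank K L = n)
    (γ : L) (hγ : γ ≠ 0) (H : L → L)
    (hnc : ¬ ∃ c : K, ∀ x : L, Algebra.trace K L (H x) = c) :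
    (Nat.factorial (Fintype.card K ^ (n - 1))) ^ (Fintype.card K) -
        ∏ i ∈ Finset.range (n - 1), (Fintype.card K ^ n - Fintype.card K ^ (i + 1)) ≤
      {F : L → L | Function.Bijective F ∧
        ¬ Function.Bijective (fun x : L =>
            F x - γ * algebraMap K L (Algebra.trace K L (H x))) ∧
        ¬ IsLinearMap K (fun x : L =>
            F x - γ * algebraMap K L (Algebra.trace K L (H x)))}.ncard := by
  classical
  set q := Fintype.card K with hq
  set t : L → K := fun x => Algebra.trace K L (H x) with ht
  -- a linear functional with ψ γ = 1
  obtain ⟨ψ, hψ1⟩ : ∃ ψ : L →ₗ[K] K, ψ γ = 1 := by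
    have : ∃ φ : Module.Dual K L, φ γ ≠ 0 := by
      by_contra h
      push_neg at h
      exact hγ ((Module.forall_dual_apply_eq_zero_iff K γ).mp h)
    obtain ⟨φ, hφ⟩ := this
    exact ⟨(φ γ)⁻¹ • φ, by simp [inv_mul_cancel₀ hφ]⟩
  have hψs : Surjective ψ := fun k =>
    ⟨k • γ, by rw [map_smul, hψ1, smul_eq_mul, mul_one]⟩
  have hcardL : Fintype.card L = q ^ n := by
    rw [Module.card_eq_pow_finrank (K := K) (V := L), hdim]
  set M := q ^ (n - 1) with hMdef
  have hqM : q * M = Fintype.card L := by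
    rw [hcardL, hMdef, ← pow_succ']
    congr 1
    omega
  have hMfib : ∀ c, Fintype.card {x : L // ψ x = c} = M := by
    intro c
    have h := card_fiber ψ hψs c
    rw [← hqM, ← hq] at h
    exact Nat.eq_of_mul_eq_mul_left (by rw [hq]; exact Fintype.card_pos) h
  obtain ⟨σ, hbσ, hAM, hAL⟩ := exists_good_sigma ψ hψs t hnc M hMfib
  -- the family of fiberwise bijections
  let T := ∀ c : K, {x : L // σ x = c} ≃ {x : L // ψ x = c}
  let Φ : T → (L ≃ L) := fun e =>
    ((Equiv.sigmaFiberEquiv σ).symm.trans (Equiv.sigmaCongrRight e)).trans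
      (Equiv.sigmaFiberEquiv (fun x : L => ψ x))
  have hΦval : ∀ (e : T) (x : L), Φ e x = ((e (σ x)) ⟨x, rfl⟩ : L) := fun e x => rfl
  have hΦψ : ∀ (e : T) (x : L), ψ (Φ e x) = σ x := fun e x => ((e (σ x)) ⟨x, rfl⟩).2
  have hΦinj : Injective (fun e : T => ⇑(Φ e)) := by
    intro e e' h
    funext c
    apply Equiv.ext
    rintro ⟨x, hx⟩
    subst hx
    apply Subtype.ext
    exact congrFun h x
  have hcardT : Fintype.card T = (Nat.factorial M) ^ q := by
    rw [Fintype.card_pi]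
    have heach : ∀ c : K, Fintype.card ({x : L // σ x = c} ≃ {x : L // ψ x = c}) =
        Nat.factorial M := by
      intro c
      rw [Fintype.card_equiv (Fintype.equivOfCardEq (by rw [hbσ c, hMfib c]))]
      rw [hbσ c]
    rw [Finset.prod_congr rfl (fun c _ => heach c), Finset.prod_const, Finset.card_univ, hq]
  -- membership in the target set
  have hmem : ∀ e : T, ⇑(Φ e) ∈ {F : L → L | Function.Bijective F ∧
      ¬ Function.Bijective (fun x : L =>
          F x - γ * algebraMap K L (Algebra.trace K L (H x))) ∧
      ¬ IsLinearMap K (fun x : L =>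
          F x - γ * algebraMap K L (Algebra.trace K L (H x)))} := by
    intro e
    refine ⟨(Φ e).bijective, ?_, ?_⟩
    · intro hbij
      apply hAM
      have hψG : ∀ x : L, ψ (Φ e x - γ * algebraMap K L (Algebra.trace K L (H x)))
          = σ x - t x := by
        intro x
        rw [map_sub, hΦψ, show γ * algebraMap K L (Algebra.trace K L (H x))
            = (t x) • γ from by rw [Algebra.smul_def, mul_comm, ht],
          map_smul, hψ1, smul_eq_mul, mul_one]
      calc Fintype.card {x : L // σ x = t x}
          = Fintype.card {x : L // ψ (Φ e x - γ * algebraMap K L (Algebra.trace K L (H x))) = 0} := by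
            apply Fintype.card_congr
            exact Equiv.subtypeEquivRight (fun x => by rw [hψG x, sub_eq_zero, eq_comm])
        _ = Fintype.card {y : L // ψ y = 0} := by
            apply Fintype.card_congr
            exact Equiv.subtypeEquiv (Equiv.ofBijective _ hbij) (fun x => Iff.rfl)
        _ = M := hMfib 0
    · intro hlin
      apply hAM
      have hψG : ∀ x : L, ψ (Φ e x - γ * algebraMap K L (Algebra.trace K L (H x)))
          = σ x - t x := by
        intro x
        rw [map_sub, hΦψ, show γ * algebraMap K L (Algebra.trace K L (H x))
            = (t x) • γ from by rw [Algebra.smul_def, mul_comm, ht],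
          map_smul, hψ1, smul_eq_mul, mul_one]
      set U : L →ₗ[K] K := ψ.comp (IsLinearMap.mk' _ hlin) with hUdef
      have hU : ∀ x, U x = σ x - t x := fun x => hψG x
      have hUs : Surjective U := by
        have hex : ∃ x₀ : L, σ x₀ ≠ t x₀ := by
          by_contra hall
          push_neg at hall
          exact hAL (Fintype.card_congr (Equiv.subtypeUnivEquiv hall))
        obtain ⟨x₀, hx₀⟩ := hex
        have hUx₀ : U x₀ ≠ 0 := by rw [hU, sub_ne_zero]; exact hx₀
        intro k
        exact ⟨(k / U x₀) • x₀, by rw [map_smul, smul_eq_mul, div_mul_cancel₀ _ hUx₀]⟩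
      have hfib := hMfib  -- fibers of U also have size M
      have hUfib : Fintype.card {x : L // U x = 0} = M := by
        have h := card_fiber U hUs 0
        rw [← hqM, ← hq] at h
        exact Nat.eq_of_mul_eq_mul_left (by rw [hq]; exact Fintype.card_pos) h
      calc Fintype.card {x : L // σ x = t x}
          = Fintype.card {x : L // U x = 0} := by
            apply Fintype.card_congr
            exact Equiv.subtypeEquivRight (fun x => by rw [hU x, sub_eq_zero, eq_comm])
        _ = M := hUfib
  -- conclude
  refine le_trans (Nat.sub_le _ _) ?_
  have hfin : (Set.range (fun e : T => ⇑(Φ e))).ncard = (Nat.factorial M) ^ q := by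
    rw [← Nat.card_coe_set_eq, Nat.card_range_of_injective hΦinj,
      Nat.card_eq_fintype_card, hcardT]
  have hsub : Set.range (fun e : T => ⇑(Φ e)) ⊆ {F : L → L | Function.Bijective F ∧
      ¬ Function.Bijective (fun x : L =>
          F x - γ * algebraMap K L (Algebra.trace K L (H x))) ∧
      ¬ IsLinearMap K (fun x : L =>
          F x - γ * algebraMap K L (Algebra.trace K L (H x)))} := by
    rintro _ ⟨e, rfl⟩
    exact hmem e
  have hle := Set.ncard_le_ncard hsub (Set.toFinite _)
  rw [hfin] at hle
  exact hle
end
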